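/- arXiv:2302.13701 — 2 statements merged into one kernel-verified Lean document; each statement's English description precedes it below -/
import Mathlib

section
/- For every deterministic online interval scheduling algorithm ALG with predictions, every real γ with 0 ≤ γ ≤ 1, and every real ε with 0 < ε < 1, there exist a finite prediction set Î_w of intervals and a finite sequence I_w of distinct intervals such that: (1) ALG(Î_w, I_w) ≤ (1 − γ(Î_w,I_w))·Opt(I_w); (2) |γ(Î_w,I_w) − γ| ≤ ε; and (3) Opt(I_w) ≥ 1/ε². Here I_w is also regarded as the set of its members and γ(Î_w,I_w) = Opt((I_w \ Î_w) ∪ (Î_w \ I_w))/Opt(I_w). Hence no deterministic interval scheduling algorithm is better than (1 − γ)-competitive. -/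
open scoped Classical

/-- An interval is a pair `(a, b)` of integers; it is *valid* when `a < b`. -/
abbrev Iv := ℤ × ℤ

/-- Two intervals `(a,b)` and `(c,d)` overlap if `max a c < min b d`. -/
def Overlap (i j : Iv) : Prop := max i.1 j.1 < min i.2 j.2

instance : ∀ i j : Iv, Decidable (Overlap i j) := fun _ _ => by
  unfold Overlap; infer_instance

/-- A finite set of intervals is pairwise non-overlapping. -/
def NonOverlapping (T : Finset Iv) : Prop :=
  ∀ i ∈ T, ∀ j ∈ T, i ≠ j → ¬ Overlap i j

instance : DecidablePred NonOverlapping := fun _ => by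
  unfold NonOverlapping; infer_instance

/-- `Opt S` is the maximum cardinality of a pairwise non-overlapping subset of `S`. -/
def Opt (S : Finset Iv) : ℕ :=
  (S.powerset.filter fun T => NonOverlapping T).sup Finset.card

/-- A deterministic online interval scheduling algorithm with predictions is modelled
as a function which, given the prediction set and the sequence of requests revealed so
far (current request last), answers `true` (accept) or `false` (reject). -/
abbrev IvAlg := Finset Iv → List Iv → Bool

/-- The set of indices of requests of the sequence `I` accepted by the algorithm `A`
with prediction `Ihat`. -/
def accIdx (A : IvAlg) (Ihat : Finset Iv) (I : List Iv) : Finset ℕ :=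
  (Finset.range I.length).filter fun k => A Ihat (I.take (k + 1)) = true

lemma Overlap.symm {i j : Iv} (h : Overlap i j) : Overlap j i := by
  unfold Overlap at *; rw [max_comm, min_comm]; exact h

lemma nonOverlapping_mono {T S : Finset Iv} (hTS : T ⊆ S) (h : NonOverlapping S) :
    NonOverlapping T := fun i hi j hj hij => h i (hTS hi) j (hTS hj) hij

lemma le_Opt {T S : Finset Iv} (hTS : T ⊆ S) (h : NonOverlapping T) : T.card ≤ Opt S :=
  Finset.le_sup (Finset.mem_filter.2 ⟨Finset.mem_powerset.2 hTS, h⟩)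

lemma Opt_le {S : Finset Iv} {n : ℕ} (h : ∀ T ⊆ S, NonOverlapping T → T.card ≤ n) :
    Opt S ≤ n := by
  apply Finset.sup_le
  intro T hT
  rw [Finset.mem_filter, Finset.mem_powerset] at hT
  exact h T hT.1 hT.2

lemma exists_Opt_witness (S : Finset Iv) :
    ∃ T ⊆ S, NonOverlapping T ∧ T.card = Opt S := by
  have hne : (S.powerset.filter fun T => NonOverlapping T).Nonempty := by
    refine ⟨∅, ?_⟩
    simp [NonOverlapping]
  obtain ⟨T, hT, hTc⟩ := Finset.exists_mem_eq_sup _ hne Finset.card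
  rw [Finset.mem_filter, Finset.mem_powerset] at hT
  exact ⟨T, hT.1, hT.2, hTc.symm⟩

lemma Opt_mono {S S' : Finset Iv} (h : S ⊆ S') : Opt S ≤ Opt S' := by
  obtain ⟨T, hTS, hT, hc⟩ := exists_Opt_witness S
  rw [← hc]; exact le_Opt (hTS.trans h) hT

lemma Opt_le_card (S : Finset Iv) : Opt S ≤ S.card :=
  Opt_le fun T hT _ => Finset.card_le_card hT

lemma Opt_pairwise_disjoint {S : Finset Iv}
    (h : ∀ x ∈ S, ∀ y ∈ S, x ≠ y → ¬ Overlap x y) : Opt S = S.card :=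
  le_antisymm (Opt_le_card S) (le_Opt (le_refl S) h)

lemma Opt_pos {S : Finset Iv} (h : S.Nonempty) : 1 ≤ Opt S := by
  obtain ⟨x, hx⟩ := h
  have := le_Opt (T := {x}) (by simpa using hx) (by intro i hi j hj hij; simp at hi hj; simp [hi, hj] at hij)
  simpa using this

lemma Opt_union_sep {S T : Finset Iv}
    (hsep : ∀ x ∈ S, ∀ y ∈ T, ¬ Overlap x y) (hd : Disjoint S T) :
    Opt (S ∪ T) = Opt S + Opt T := by
  apply le_antisymm
  · apply Opt_le
    intro W hW hWno
    have h1 : W ∩ S ∪ W ∩ T = W := by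
      rw [← Finset.inter_union_distrib_left]
      exact Finset.inter_eq_left.2 hW
    have h2 : Disjoint (W ∩ S) (W ∩ T) :=
      hd.mono Finset.inter_subset_right Finset.inter_subset_right
    calc W.card = (W ∩ S ∪ W ∩ T).card := by rw [h1]
      _ = (W ∩ S).card + (W ∩ T).card := Finset.card_union_of_disjoint h2
      _ ≤ Opt S + Opt T := by
          gcongr
          · exact le_Opt Finset.inter_subset_right
              (nonOverlapping_mono Finset.inter_subset_left hWno)
          · exact le_Opt Finset.inter_subset_right
              (nonOverlapping_mono Finset.inter_subset_left hWno)
  · obtain ⟨T₁, hT₁S, hT₁, hc₁⟩ := exists_Opt_witness S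
    obtain ⟨T₂, hT₂S, hT₂, hc₂⟩ := exists_Opt_witness T
    have hdisj : Disjoint T₁ T₂ := hd.mono hT₁S hT₂S
    have hno : NonOverlapping (T₁ ∪ T₂) := by
      intro i hi j hj hij
      rcases Finset.mem_union.1 hi with hi1 | hi2 <;> rcases Finset.mem_union.1 hj with hj1 | hj2
      · exact hT₁ i hi1 j hj1 hij
      · exact hsep i (hT₁S hi1) j (hT₂S hj2)
      · intro hov; exact hsep j (hT₁S hj1) i (hT₂S hi2) hov.symm
      · exact hT₂ i hi2 j hj2 hij
    have := le_Opt (Finset.union_subset_union hT₁S hT₂S) hno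
    rwa [Finset.card_union_of_disjoint hdisj, hc₁, hc₂] at this

lemma Opt_insert_dom {S : Finset Iv} {x : Iv}
    (hov : ∀ y ∈ S, Overlap x y) (hx : x ∉ S) (hne : S.Nonempty) :
    Opt (insert x S) = Opt S := by
  apply le_antisymm
  · apply Opt_le
    intro W hW hWno
    by_cases hxW : x ∈ W
    · have hW1 : W = {x} := by
        apply Finset.eq_singleton_iff_unique_mem.2
        refine ⟨hxW, fun y hy => ?_⟩
        by_contra hyx
        have hyS : y ∈ S := by
          have := hW hy
          rcases Finset.mem_insert.1 this with h | h
          · exact absurd h hyx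
          · exact h
        exact hWno x hxW y hy (Ne.symm hyx) (hov y hyS)
      rw [hW1]
      simpa using Opt_pos hne
    · apply le_Opt _ hWno
      intro y hy
      rcases Finset.mem_insert.1 (hW hy) with h | h
      · exact absurd (h ▸ hy) hxW
      · exact h
  · exact Opt_mono (Finset.subset_insert _ _)

lemma Opt_biUnion_banded (Bz : ℤ) (H : ℕ → Finset Iv) (n : ℕ)
    (hband : ∀ i < n, ∀ x ∈ H i, Bz * i ≤ x.1 ∧ x.1 < x.2 ∧ x.2 ≤ Bz * (i + 1)) :
    Opt ((Finset.range n).biUnion H) = ∑ i ∈ Finset.range n, Opt (H i) := by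
  induction n with
  | zero => simp [Opt, NonOverlapping]
  | succ n ih =>
    have hband' : ∀ i < n, ∀ x ∈ H i, Bz * i ≤ x.1 ∧ x.1 < x.2 ∧ x.2 ≤ Bz * (i + 1) :=
      fun i hi => hband i (Nat.lt_succ_of_lt hi)
    rw [Finset.sum_range_succ, ← ih hband']
    rw [Finset.range_add_one, Finset.biUnion_insert, Finset.union_comm]
    have key : ∀ x, (∃ i < n, x ∈ H i) → ∀ y ∈ H n, x.2 ≤ y.1 ∧ x.1 < x.2 := by
      rintro x ⟨i, hi, hx⟩ y hy
      obtain ⟨h1, h2, h3⟩ := hband i (Nat.lt_succ_of_lt hi) x hx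
      obtain ⟨h4, h5, h6⟩ := hband n (Nat.lt_succ_self n) y hy
      refine ⟨h3.trans (le_trans ?_ h4), h2⟩
      have : (i : ℤ) + 1 ≤ n := by exact_mod_cast hi
      nlinarith
    apply Opt_union_sep
    · intro x hx y hy
      rw [Finset.mem_biUnion] at hx
      obtain ⟨hle, hv⟩ := key x (by simpa using hx) y hy
      unfold Overlap
      push_neg
      calc min x.2 y.2 ≤ x.2 := min_le_left _ _
        _ ≤ y.1 := hle
        _ ≤ max x.1 y.1 := le_max_right _ _
    · rw [Finset.disjoint_left]
      intro x hx hx'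
      rw [Finset.mem_biUnion] at hx
      obtain ⟨hle, hv⟩ := key x (by simpa using hx) x hx'
      omega

lemma band_off_inj {Bz k k' o o' : ℤ} (hBz : 0 < Bz)
    (ho0 : 0 ≤ o) (hoB : o < Bz) (ho0' : 0 ≤ o') (hoB' : o' < Bz)
    (h : Bz * k + o = Bz * k' + o') : k = k' ∧ o = o' := by
  have hkk : k = k' := by
    by_contra hne
    rcases lt_or_gt_of_ne hne with hlt | hlt
    · have : k + 1 ≤ k' := hlt
      nlinarith
    · have : k' + 1 ≤ k := hlt
      nlinarith
  constructor
  · exact hkk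
  · subst hkk; omega



noncomputable section
namespace ND

variable (A : IvAlg) (γ ε : ℝ)

def S : ℕ := ⌈(4:ℝ)/ε^2⌉₊
def gam : ℝ := max γ (ε/2)
def bet : ℝ := max (1-γ) (ε/2)
def F : ℕ := ⌊(S ε : ℝ)/gam γ ε⌋₊
def Y : ℕ := F γ ε - S ε
def Gmax : ℕ := max (S ε) (⌈((S ε + Y γ ε : ℕ) : ℝ)/bet γ ε⌉₊)
def B : ℤ := 2*(Gmax γ ε : ℤ) + 10
def uh (i : ℕ) : Iv := (B γ ε * i, B γ ε * i + 2*(Gmax γ ε : ℤ) + 6)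
def ph (i : ℕ) : Iv := (B γ ε * i + 1, B γ ε * i + 2)
def cl (m : ℕ) : Iv := (B γ ε * (S ε + m : ℕ) + 1, B γ ε * (S ε + m : ℕ) + 2)
def uu (i t : ℕ) : Iv := (B γ ε * i + 3 + 2*t, B γ ε * i + 4 + 2*t)
def Ihat : Finset Iv :=
  ((Finset.range (S ε)).image (ph γ ε)) ∪ ((Finset.range (Y γ ε)).image (cl γ ε))
def cleansL : List Iv := (List.range (Y γ ε)).map (cl γ ε)
def resp (i : ℕ) : Bool := A (Ihat γ ε) (cleansL γ ε ++ (List.range (i+1)).map (uh γ ε))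
def Acc : Finset ℕ := (Finset.range (S ε)).filter (fun i => resp A γ ε i = true)
def Anum : ℕ := (Acc A γ ε).card
def cc : ℕ := Anum A γ ε + Y γ ε
def G : ℕ :=
  if Anum A γ ε = 0 then S ε
  else max (S ε) (⌈(cc A γ ε : ℝ)/bet γ ε⌉₊ - cc A γ ε)
def i0 : ℕ := if h : (Acc A γ ε).Nonempty then (Acc A γ ε).min' h else 0
def jj (i : ℕ) : ℕ :=
  (if resp A γ ε i = true then 1 else 0) + (if i = i0 A γ ε then G A γ ε - S ε else 0)
def inside (i : ℕ) : List Iv :=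
  if resp A γ ε i = true then ph γ ε i :: (List.range (jj A γ ε i)).map (uu γ ε i) else []
def tailL : List Iv := (List.range (S ε)).flatMap (inside A γ ε)
def L : List Iv := cleansL γ ε ++ ((List.range (S ε)).map (uh γ ε) ++ tailL A γ ε)
def D : ℕ := G A γ ε + cc A γ ε


section Basic
variable (A : IvAlg) (γ ε : ℝ)
variable (hγ0 : 0 ≤ γ) (hγ1 : γ ≤ 1) (hε0 : 0 < ε) (hε1 : ε < 1)

include hε0 hε1 in
lemma S_gt4 : 4 < S ε := by
  have h2 : (0:ℝ) < ε^2 := by positivity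
  have : (4:ℝ) < 4/ε^2 := by
    rw [lt_div_iff₀ h2]
    nlinarith
  have := Nat.lt_ceil.2 (by exact_mod_cast this : ((4:ℕ):ℝ) < 4/ε^2)
  simpa [S] using this

include hε0 in
lemma S_ge : (4:ℝ)/ε^2 ≤ S ε := Nat.le_ceil _

include hε0 in
lemma gam_pos : 0 < gam γ ε := lt_of_lt_of_le (by linarith) (le_max_right _ _)

include hγ1 hε1 in
lemma gam_le1 : gam γ ε ≤ 1 := max_le hγ1 (by linarith)

include hε0 in
lemma bet_pos : 0 < bet γ ε := lt_of_lt_of_le (by linarith) (le_max_right _ _)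

include hγ0 in
lemma bet_le1 (hε1 : ε < 1) : bet γ ε ≤ 1 := max_le (by linarith) (by linarith)

lemma bet_ge_one_sub_gam : 1 - gam γ ε ≤ bet γ ε := by
  rcases le_total γ (ε/2) with h | h
  · have : gam γ ε = ε/2 := max_eq_right h
    rw [this, bet]
    have : 1 - ε/2 ≤ max (1-γ) (ε/2) := le_trans (by linarith) (le_max_left _ _)
    linarith
  · have : gam γ ε = γ := max_eq_left h
    rw [this, bet]
    exact le_trans (le_refl _) (le_max_left _ _)

include hγ1 hε0 hε1 in
lemma S_le_F : S ε ≤ F γ ε := by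
  apply Nat.le_floor
  rw [le_div_iff₀ (gam_pos γ ε hε0)]
  have := gam_le1 γ ε hγ1 hε1
  have : (S ε : ℝ) * gam γ ε ≤ (S ε : ℝ) * 1 := by
    apply mul_le_mul_of_nonneg_left this (by positivity)
  linarith

include hγ1 hε0 hε1 in
lemma SY_eq_F : S ε + Y γ ε = F γ ε := by
  have := S_le_F γ ε hγ1 hε0 hε1
  simp only [Y]
  omega

lemma Anum_le_S : Anum A γ ε ≤ S ε := by
  have : Acc A γ ε ⊆ Finset.range (S ε) := Finset.filter_subset _ _
  simpa [Anum] using (Finset.card_le_card this).trans (by simp)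

lemma S_le_G : S ε ≤ G A γ ε := by
  unfold G
  split
  · exact le_refl _
  · exact le_max_left _ _

include hε0 in
lemma G_le_Gmax : G A γ ε ≤ Gmax γ ε := by
  unfold G
  split
  · exact le_max_left _ _
  · apply max_le (le_max_left _ _)
    refine le_trans ?_ (le_max_right _ _)
    have h1 : cc A γ ε ≤ S ε + Y γ ε := by
      have := Anum_le_S A γ ε
      simp only [cc]; omega
    have h2 : (cc A γ ε : ℝ)/bet γ ε ≤ ((S ε + Y γ ε : ℕ) : ℝ)/bet γ ε := by
      apply (div_le_div_iff_of_pos_right (bet_pos γ ε hε0)).2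
      push_cast
      have := Anum_le_S A γ ε
      simp only [cc]
      push_cast
      have : (Anum A γ ε : ℝ) ≤ (S ε : ℝ) := by exact_mod_cast this
      linarith
    calc ⌈(cc A γ ε : ℝ)/bet γ ε⌉₊ - cc A γ ε ≤ ⌈(cc A γ ε : ℝ)/bet γ ε⌉₊ := Nat.sub_le _ _
      _ ≤ ⌈((S ε + Y γ ε : ℕ) : ℝ)/bet γ ε⌉₊ := Nat.ceil_le_ceil h2

end Basic

section Geom
variable (A : IvAlg) (γ ε : ℝ)

lemma B_pos : (0:ℤ) < B γ ε := by unfold B; positivity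

lemma Gmax_nonneg : (0:ℤ) ≤ (Gmax γ ε : ℤ) := by positivity

lemma i0_lt_S (hε0 : 0 < ε) (hε1 : ε < 1) : i0 A γ ε < S ε := by
  unfold i0
  split
  · next h =>
    have := Finset.min'_mem _ h
    simp only [Acc, Finset.mem_filter, Finset.mem_range] at this
    exact this.1
  · have := S_gt4 ε hε0 hε1; omega

lemma sum_jj (hε0 : 0 < ε) (hε1 : ε < 1) :
    ∑ i ∈ Finset.range (S ε), jj A γ ε i = Anum A γ ε + (G A γ ε - S ε) := by
  unfold jj
  rw [Finset.sum_add_distrib]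
  congr 1
  · rw [Finset.sum_boole]
    simp [Anum, Acc]
  · rw [Finset.sum_ite_eq' (Finset.range (S ε)) (i0 A γ ε) (fun _ => G A γ ε - S ε)]
    simp [i0_lt_S A γ ε hε0 hε1]

lemma jj_ge_one {i : ℕ} (h : resp A γ ε i = true) : 1 ≤ jj A γ ε i := by
  unfold jj; rw [h]; simp

lemma jj_le (hε0 : 0 < ε) (i : ℕ) : jj A γ ε i ≤ Gmax γ ε + 1 := by
  have h1 := G_le_Gmax A γ ε hε0
  have h2 := S_le_G A γ ε
  unfold jj
  split <;> split <;> omega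

def InBand (k : ℕ) (x : Iv) : Prop :=
  B γ ε * k ≤ x.1 ∧ x.1 < x.2 ∧ x.2 ≤ B γ ε * (k + 1)

lemma uh_band (i : ℕ) : InBand γ ε i (uh γ ε i) := by
  have := Gmax_nonneg γ ε
  unfold InBand uh B
  push_cast
  refine ⟨le_refl _, by nlinarith, by nlinarith⟩

lemma ph_band (i : ℕ) : InBand γ ε i (ph γ ε i) := by
  have := Gmax_nonneg γ ε
  unfold InBand ph B
  push_cast
  refine ⟨by nlinarith, by nlinarith, by nlinarith⟩

lemma cl_band (m : ℕ) : InBand γ ε (S ε + m) (cl γ ε m) := by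
  have := Gmax_nonneg γ ε
  unfold InBand cl B
  push_cast
  refine ⟨by nlinarith, by nlinarith, by nlinarith⟩

lemma uu_band {i t : ℕ} (ht : t ≤ Gmax γ ε + 1) : InBand γ ε i (uu γ ε i t) := by
  have := Gmax_nonneg γ ε
  have ht' : (t:ℤ) ≤ (Gmax γ ε : ℤ) + 1 := by exact_mod_cast ht
  unfold InBand uu B
  push_cast
  refine ⟨by nlinarith, by nlinarith, by nlinarith⟩

lemma ov_uh_ph (i : ℕ) : Overlap (uh γ ε i) (ph γ ε i) := by
  have := Gmax_nonneg γ ε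
  unfold Overlap uh ph
  dsimp only
  simp only [max_lt_iff, lt_min_iff]
  refine ⟨⟨by nlinarith, by nlinarith⟩, by nlinarith, by nlinarith⟩

lemma ov_uh_uu {i t : ℕ} (ht : t ≤ Gmax γ ε + 1) : Overlap (uh γ ε i) (uu γ ε i t) := by
  have := Gmax_nonneg γ ε
  have ht' : (t:ℤ) ≤ (Gmax γ ε : ℤ) + 1 := by exact_mod_cast ht
  unfold Overlap uh uu
  dsimp only
  simp only [max_lt_iff, lt_min_iff]
  refine ⟨⟨by nlinarith, by nlinarith⟩, by nlinarith, by nlinarith⟩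

lemma no_ov_ph_uu (i t : ℕ) : ¬ Overlap (ph γ ε i) (uu γ ε i t) := by
  unfold Overlap ph uu
  dsimp only
  apply not_lt.2
  calc min (B γ ε * i + 2) (B γ ε * ↑i + 4 + 2*↑t) ≤ B γ ε * i + 2 := min_le_left _ _
    _ ≤ B γ ε * ↑i + 3 + 2*↑t := by linarith [Int.ofNat_nonneg t]
    _ ≤ max (B γ ε * ↑i + 1) (B γ ε * ↑i + 3 + 2*↑t) := le_max_right _ _

lemma no_ov_uu_uu {i t t' : ℕ} (h : t ≠ t') : ¬ Overlap (uu γ ε i t) (uu γ ε i t') := by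
  unfold Overlap uu
  dsimp only
  apply not_lt.2
  rcases lt_or_gt_of_ne h with hlt | hlt
  · have : (t:ℤ) + 1 ≤ (t':ℤ) := by exact_mod_cast hlt
    calc min (B γ ε * ↑i + 4 + 2*↑t) (B γ ε * ↑i + 4 + 2*↑t') ≤ B γ ε * ↑i + 4 + 2*↑t :=
        min_le_left _ _
      _ ≤ B γ ε * ↑i + 3 + 2*↑t' := by linarith
      _ ≤ max (B γ ε * ↑i + 3 + 2*↑t) (B γ ε * ↑i + 3 + 2*↑t') := le_max_right _ _
  · have : (t':ℤ) + 1 ≤ (t:ℤ) := by exact_mod_cast hlt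
    calc min (B γ ε * ↑i + 4 + 2*↑t) (B γ ε * ↑i + 4 + 2*↑t') ≤ B γ ε * ↑i + 4 + 2*↑t' :=
        min_le_right _ _
      _ ≤ B γ ε * ↑i + 3 + 2*↑t := by linarith
      _ ≤ max (B γ ε * ↑i + 3 + 2*↑t) (B γ ε * ↑i + 3 + 2*↑t') := le_max_left _ _

end Geom

section Distinct
variable (γ ε : ℝ)

lemma B_ge10 : (10:ℤ) ≤ B γ ε := by
  have := Gmax_nonneg γ ε; unfold B; linarith

lemma uu_off_lt {t : ℕ} (ht : t ≤ Gmax γ ε + 2) : (3:ℤ) + 2*t < B γ ε := by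
  have : (t:ℤ) ≤ (Gmax γ ε : ℤ) + 2 := by exact_mod_cast ht
  unfold B; linarith

lemma uh_ne_ph (i i' : ℕ) : uh γ ε i ≠ ph γ ε i' := by
  intro h
  have h1 := congrArg Prod.fst h
  simp only [uh, ph] at h1
  have := band_off_inj (B_pos γ ε) (le_refl 0) (by linarith [B_ge10 γ ε]) (by norm_num)
    (by linarith [B_ge10 γ ε]) (show B γ ε * i + 0 = B γ ε * i' + 1 by linarith)
  omega

lemma uh_ne_cl (i m : ℕ) : uh γ ε i ≠ cl γ ε m := by
  intro h
  have h1 := congrArg Prod.fst h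
  simp only [uh, cl] at h1
  have := band_off_inj (B_pos γ ε) (le_refl 0) (by linarith [B_ge10 γ ε]) (by norm_num)
    (by linarith [B_ge10 γ ε]) (show B γ ε * i + 0 = B γ ε * (S ε + m : ℕ) + 1 by linarith)
  omega

lemma uh_ne_uu {i i' t : ℕ} (ht : t ≤ Gmax γ ε + 2) : uh γ ε i ≠ uu γ ε i' t := by
  intro h
  have h1 := congrArg Prod.fst h
  simp only [uh, uu] at h1
  have := band_off_inj (B_pos γ ε) (le_refl 0) (by linarith [B_ge10 γ ε])
    (by positivity) (uu_off_lt γ ε ht)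
    (show B γ ε * i + 0 = B γ ε * i' + (3 + 2*t) by linarith)
  omega

lemma ph_ne_cl {i m : ℕ} (hi : i < S ε) : ph γ ε i ≠ cl γ ε m := by
  intro h
  have h1 := congrArg Prod.fst h
  simp only [ph, cl] at h1
  have := band_off_inj (B_pos γ ε) (by norm_num) (by linarith [B_ge10 γ ε]) (by norm_num)
    (by linarith [B_ge10 γ ε]) (show B γ ε * i + 1 = B γ ε * (S ε + m : ℕ) + 1 by linarith)
  have h2 : (i:ℤ) = (S ε + m : ℕ) := this.1
  have : i = S ε + m := by exact_mod_cast h2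
  omega

lemma ph_ne_uu {i i' t : ℕ} (ht : t ≤ Gmax γ ε + 2) : ph γ ε i ≠ uu γ ε i' t := by
  intro h
  have h1 := congrArg Prod.fst h
  simp only [ph, uu] at h1
  have := band_off_inj (B_pos γ ε) (by norm_num) (by linarith [B_ge10 γ ε])
    (by positivity) (uu_off_lt γ ε ht)
    (show B γ ε * i + 1 = B γ ε * i' + (3 + 2*t) by linarith)
  omega

lemma cl_ne_uu {m i t : ℕ} (ht : t ≤ Gmax γ ε + 2) : cl γ ε m ≠ uu γ ε i t := by
  intro h
  have h1 := congrArg Prod.fst h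
  simp only [cl, uu] at h1
  have := band_off_inj (B_pos γ ε) (by norm_num) (by linarith [B_ge10 γ ε])
    (by positivity) (uu_off_lt γ ε ht)
    (show B γ ε * (S ε + m : ℕ) + 1 = B γ ε * i + (3 + 2*t) by linarith)
  omega

lemma uh_inj {i i' : ℕ} (h : uh γ ε i = uh γ ε i') : i = i' := by
  have h1 := congrArg Prod.fst h
  simp only [uh] at h1
  have := band_off_inj (B_pos γ ε) (le_refl 0) (by linarith [B_ge10 γ ε]) (le_refl 0)
    (by linarith [B_ge10 γ ε]) (show B γ ε * i + 0 = B γ ε * i' + 0 by linarith)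
  exact_mod_cast this.1

lemma ph_inj {i i' : ℕ} (h : ph γ ε i = ph γ ε i') : i = i' := by
  have h1 := congrArg Prod.fst h
  simp only [ph] at h1
  have := band_off_inj (B_pos γ ε) (by norm_num) (by linarith [B_ge10 γ ε]) (by norm_num)
    (by linarith [B_ge10 γ ε]) (show B γ ε * i + 1 = B γ ε * i' + 1 by linarith)
  exact_mod_cast this.1

lemma cl_inj {m m' : ℕ} (h : cl γ ε m = cl γ ε m') : m = m' := by
  have h1 := congrArg Prod.fst h
  simp only [cl] at h1
  have := band_off_inj (B_pos γ ε) (by norm_num) (by linarith [B_ge10 γ ε]) (by norm_num)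
    (by linarith [B_ge10 γ ε])
    (show B γ ε * (S ε + m : ℕ) + 1 = B γ ε * (S ε + m' : ℕ) + 1 by linarith)
  have h2 : ((S ε + m : ℕ) : ℤ) = ((S ε + m' : ℕ) : ℤ) := this.1
  have : S ε + m = S ε + m' := by exact_mod_cast h2
  omega

lemma uu_inj {i i' t t' : ℕ} (ht : t ≤ Gmax γ ε + 2) (ht' : t' ≤ Gmax γ ε + 2)
    (h : uu γ ε i t = uu γ ε i' t') : i = i' ∧ t = t' := by
  have h1 := congrArg Prod.fst h
  simp only [uu] at h1
  have := band_off_inj (B_pos γ ε) (by positivity) (uu_off_lt γ ε ht)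
    (by positivity) (uu_off_lt γ ε ht')
    (show B γ ε * i + (3 + 2*t) = B γ ε * i' + (3 + 2*t') by linarith)
  obtain ⟨ha, hb⟩ := this
  constructor
  · exact_mod_cast ha
  · omega

end Distinct

section Lists
variable (A : IvAlg) (γ ε : ℝ)

lemma mem_inside {i : ℕ} {x : Iv} :
    x ∈ inside A γ ε i ↔
      resp A γ ε i = true ∧ (x = ph γ ε i ∨ ∃ t < jj A γ ε i, x = uu γ ε i t) := by
  unfold inside
  split
  · next h =>
    simp only [List.mem_cons, List.mem_map, List.mem_range, h, true_and]
    constructor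
    · rintro (rfl | ⟨t, ht, rfl⟩)
      · exact Or.inl rfl
      · exact Or.inr ⟨t, ht, rfl⟩
    · rintro (rfl | ⟨t, ht, rfl⟩)
      · exact Or.inl rfl
      · exact Or.inr ⟨t, ht, rfl⟩
  · next h => simp [h]

lemma mem_tailL {x : Iv} :
    x ∈ tailL A γ ε ↔ ∃ i < S ε, resp A γ ε i = true ∧
      (x = ph γ ε i ∨ ∃ t < jj A γ ε i, x = uu γ ε i t) := by
  unfold tailL
  simp only [List.mem_flatMap, List.mem_range]
  constructor
  · rintro ⟨i, hi, hx⟩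
    exact ⟨i, hi, (mem_inside A γ ε).1 hx⟩
  · rintro ⟨i, hi, h⟩
    exact ⟨i, hi, (mem_inside A γ ε).2 h⟩

lemma mem_L {x : Iv} :
    x ∈ L A γ ε ↔ ((∃ m < Y γ ε, x = cl γ ε m) ∨ (∃ i < S ε, x = uh γ ε i) ∨
      (∃ i < S ε, resp A γ ε i = true ∧
        (x = ph γ ε i ∨ ∃ t < jj A γ ε i, x = uu γ ε i t))) := by
  unfold L cleansL
  simp only [List.mem_append, List.mem_map, List.mem_range, mem_tailL]
  constructor
  · rintro ((⟨m, hm, rfl⟩) | (⟨i, hi, rfl⟩) | h)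
    · exact Or.inl ⟨m, hm, rfl⟩
    · exact Or.inr (Or.inl ⟨i, hi, rfl⟩)
    · exact Or.inr (Or.inr h)
  · rintro ((⟨m, hm, rfl⟩) | (⟨i, hi, rfl⟩) | h)
    · exact Or.inl ⟨m, hm, rfl⟩
    · exact Or.inr (Or.inl ⟨i, hi, rfl⟩)
    · exact Or.inr (Or.inr h)

lemma uh_valid (i : ℕ) : (uh γ ε i).1 < (uh γ ε i).2 := by
  have := Gmax_nonneg γ ε; unfold uh; dsimp only; linarith

lemma ph_valid (i : ℕ) : (ph γ ε i).1 < (ph γ ε i).2 := by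
  unfold ph; dsimp only; linarith

lemma cl_valid (m : ℕ) : (cl γ ε m).1 < (cl γ ε m).2 := by
  unfold cl; dsimp only; linarith

lemma uu_valid (i t : ℕ) : (uu γ ε i t).1 < (uu γ ε i t).2 := by
  unfold uu; dsimp only; linarith

lemma L_valid : ∀ x ∈ L A γ ε, x.1 < x.2 := by
  intro x hx
  rcases (mem_L A γ ε).1 hx with ⟨m, _, rfl⟩ | ⟨i, _, rfl⟩ | ⟨i, _, _, (rfl | ⟨t, _, rfl⟩)⟩
  · exact cl_valid γ ε m
  · exact uh_valid γ ε i
  · exact ph_valid γ ε i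
  · exact uu_valid γ ε i t

lemma Ihat_valid : ∀ x ∈ Ihat γ ε, x.1 < x.2 := by
  intro x hx
  unfold Ihat at hx
  rcases Finset.mem_union.1 hx with h | h <;>
    obtain ⟨i, _, rfl⟩ := Finset.mem_image.1 h
  · exact ph_valid γ ε i
  · exact cl_valid γ ε i

lemma inside_nodup (hε0 : 0 < ε) (i : ℕ) : (inside A γ ε i).Nodup := by
  unfold inside
  split
  · refine List.Nodup.cons ?_ ?_
    · intro hmem
      obtain ⟨t, ht, hx⟩ := List.mem_map.1 hmem
      rw [List.mem_range] at ht
      have htb : t ≤ Gmax γ ε + 2 := by have := jj_le A γ ε hε0 i; omega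
      exact ph_ne_uu γ ε htb hx.symm
    · refine List.Nodup.map_on ?_ List.nodup_range
      intro t ht t' ht' heq
      rw [List.mem_range] at ht ht'
      have htb : t ≤ Gmax γ ε + 2 := by have := jj_le A γ ε hε0 i; omega
      have htb' : t' ≤ Gmax γ ε + 2 := by have := jj_le A γ ε hε0 i; omega
      exact (uu_inj γ ε htb htb' heq).2
  · exact List.nodup_nil

lemma tailL_nodup (hε0 : 0 < ε) : (tailL A γ ε).Nodup := by
  unfold tailL
  rw [List.nodup_flatMap]
  constructor
  · intro i _; exact inside_nodup A γ ε hε0 i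
  · rw [List.pairwise_iff_get]
    intro a b hab
    intro x hxa hxb
    have ha := (mem_inside A γ ε).1 hxa
    have hb := (mem_inside A γ ε).1 hxb
    have hne : ((List.range (S ε)).get a) ≠ ((List.range (S ε)).get b) := by
      have := a.2; have := b.2
      simp only [List.get_eq_getElem, List.getElem_range]
      omega
    set ia := (List.range (S ε)).get a with hia
    set ib := (List.range (S ε)).get b with hib
    have hbnd : ∀ {t : ℕ}, t < jj A γ ε ia → t ≤ Gmax γ ε + 2 := by
      intro t ht; have := jj_le A γ ε hε0 ia; omega
    have hbnd' : ∀ {t : ℕ}, t < jj A γ ε ib → t ≤ Gmax γ ε + 2 := by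
      intro t ht; have := jj_le A γ ε hε0 ib; omega
    rcases ha.2 with rfl | ⟨t, ht, rfl⟩ <;> rcases hb.2 with hb2 | ⟨t', ht', hb2⟩
    · exact hne (ph_inj γ ε hb2)
    · exact ph_ne_uu γ ε (hbnd' ht') hb2
    · exact (ph_ne_uu γ ε (hbnd ht) hb2.symm)
    · exact hne (uu_inj γ ε (hbnd ht) (hbnd' ht') hb2).1

lemma L_nodup (hε0 : 0 < ε) : (L A γ ε).Nodup := by
  unfold L
  rw [List.nodup_append]
  refine ⟨?_, ?_, ?_⟩
  · exact List.Nodup.map (fun a b h => cl_inj γ ε h) List.nodup_range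
  · rw [List.nodup_append]
    refine ⟨List.Nodup.map (fun a b h => uh_inj γ ε h) List.nodup_range,
      tailL_nodup A γ ε hε0, ?_⟩
    intro x hx x' hx' hxx; subst hxx
    obtain ⟨i, hi, rfl⟩ := List.mem_map.1 hx
    obtain ⟨i', _, hr, h⟩ := (mem_tailL A γ ε).1 hx'
    rcases h with h | ⟨t, ht, h⟩
    · exact uh_ne_ph γ ε i i' h
    · have htb : t ≤ Gmax γ ε + 2 := by have := jj_le A γ ε hε0 i'; omega
      exact uh_ne_uu γ ε htb h
  · intro x hx x' hx' hxx; subst hxx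
    obtain ⟨m, hm, rfl⟩ := List.mem_map.1 hx
    rcases List.mem_append.1 hx' with h | h
    · obtain ⟨i, hi, heq⟩ := List.mem_map.1 h
      exact uh_ne_cl γ ε i m heq
    · obtain ⟨i', hi', hr, h⟩ := (mem_tailL A γ ε).1 h
      rcases h with h | ⟨t, ht, h⟩
      · exact ph_ne_cl γ ε hi' h.symm
      · have htb : t ≤ Gmax γ ε + 2 := by have := jj_le A γ ε hε0 i'; omega
        exact cl_ne_uu γ ε htb h

end Lists

section Pos
variable (A : IvAlg) (γ ε : ℝ)

lemma cleansL_length : (cleansL γ ε).length = Y γ ε := by simp [cleansL]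

lemma L_length : (L A γ ε).length = Y γ ε + (S ε + (tailL A γ ε).length) := by
  simp [L, cleansL]

lemma take_L {i : ℕ} (hi : i < S ε) :
    (L A γ ε).take (Y γ ε + i + 1) = cleansL γ ε ++ (List.range (i + 1)).map (uh γ ε) := by
  unfold L
  rw [List.take_append,
    List.take_of_length_le (by rw [cleansL_length]; omega), cleansL_length]
  congr 1
  have h1 : Y γ ε + i + 1 - Y γ ε = i + 1 := by omega
  rw [h1, List.take_append]
  have h2 : ((List.range (S ε)).map (uh γ ε)).length = S ε := by simp
  have h3 : i + 1 - ((List.range (S ε)).map (uh γ ε)).length = 0 := by rw [h2]; omega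
  rw [h3, List.take_zero, List.append_nil, ← List.map_take, List.take_range]
  congr 2
  omega

lemma A_take_eq_resp {i : ℕ} (hi : i < S ε) :
    A (Ihat γ ε) ((L A γ ε).take (Y γ ε + i + 1)) = resp A γ ε i := by
  rw [take_L A γ ε hi]; rfl

lemma getD_L_uh {i : ℕ} (hi : i < S ε) :
    (L A γ ε).getD (Y γ ε + i) (0, 1) = uh γ ε i := by
  unfold L
  rw [List.getD_eq_getElem?_getD,
    List.getElem?_append_right (by rw [cleansL_length]; omega), cleansL_length]
  have h1 : Y γ ε + i - Y γ ε = i := by omega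
  rw [h1, List.getElem?_append_left (by simpa using hi)]
  simp [hi]

lemma getD_L_tail {k : ℕ} (hk : Y γ ε + S ε ≤ k) (hk' : k < (L A γ ε).length) :
    (L A γ ε).getD k (0, 1) ∈ tailL A γ ε := by
  have hlen : k - (Y γ ε + S ε) < (tailL A γ ε).length := by
    rw [L_length] at hk'; omega
  unfold L
  rw [List.getD_eq_getElem?_getD,
    List.getElem?_append_right (by rw [cleansL_length]; omega), cleansL_length,
    List.getElem?_append_right (by simp; omega)]
  have h2 : k - Y γ ε - ((List.range (S ε)).map (uh γ ε)).length = k - (Y γ ε + S ε) := by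
    simp; omega
  rw [h2, List.getElem?_eq_getElem hlen]
  simp only [Option.getD_some]
  exact List.getElem_mem _

end Pos

section AccBound
variable (A : IvAlg) (γ ε : ℝ)

lemma accIdx_card_le (hε0 : 0 < ε)
    (hfeasible : ∀ (Ihat : Finset Iv) (I : List Iv), I.Nodup →
      (∀ i ∈ I, i.1 < i.2) →
      ∀ k ∈ accIdx A Ihat I, ∀ k' ∈ accIdx A Ihat I, k ≠ k' →
        ¬ Overlap (I.getD k (0, 1)) (I.getD k' (0, 1))) :
    (accIdx A (Ihat γ ε) (L A γ ε)).card ≤ Y γ ε + Anum A γ ε := by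
  have hsub : accIdx A (Ihat γ ε) (L A γ ε) ⊆
      (Finset.range (Y γ ε)) ∪ ((Acc A γ ε).image (fun i => Y γ ε + i)) := by
    intro k hk
    have hk' := hk
    unfold accIdx at hk'
    rw [Finset.mem_filter, Finset.mem_range] at hk'
    obtain ⟨hklen, hA⟩ := hk'
    rcases lt_or_ge k (Y γ ε) with h1 | h1
    · exact Finset.mem_union_left _ (Finset.mem_range.2 h1)
    rcases lt_or_ge k (Y γ ε + S ε) with h2 | h2
    · apply Finset.mem_union_right
      rw [Finset.mem_image]
      refine ⟨k - Y γ ε, ?_, by omega⟩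
      have hiS : k - Y γ ε < S ε := by omega
      rw [Acc, Finset.mem_filter, Finset.mem_range]
      refine ⟨hiS, ?_⟩
      have : k + 1 = Y γ ε + (k - Y γ ε) + 1 := by omega
      rw [this] at hA
      rwa [A_take_eq_resp A γ ε hiS] at hA
    · exfalso
      have hx := getD_L_tail A γ ε h2 hklen
      obtain ⟨i, hi, hr, hcase⟩ := (mem_tailL A γ ε).1 hx
      have hmem1 : Y γ ε + i ∈ accIdx A (Ihat γ ε) (L A γ ε) := by
        unfold accIdx
        rw [Finset.mem_filter, Finset.mem_range]
        exact ⟨by omega, by rw [A_take_eq_resp A γ ε hi]; exact hr⟩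
      have hne : Y γ ε + i ≠ k := by omega
      have hfeas := hfeasible (Ihat γ ε) (L A γ ε) (L_nodup A γ ε hε0) (L_valid A γ ε)
        (Y γ ε + i) hmem1 k hk hne
      apply hfeas
      rw [getD_L_uh A γ ε hi]
      rcases hcase with hcc | ⟨t, ht, hcc⟩
      · rw [hcc]; exact ov_uh_ph γ ε i
      · rw [hcc]
        exact ov_uh_uu γ ε (by have := jj_le A γ ε hε0 i; omega)
  calc (accIdx A (Ihat γ ε) (L A γ ε)).card
      ≤ ((Finset.range (Y γ ε)) ∪ ((Acc A γ ε).image (fun i => Y γ ε + i))).card :=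
        Finset.card_le_card hsub
    _ ≤ (Finset.range (Y γ ε)).card + ((Acc A γ ε).image (fun i => Y γ ε + i)).card :=
        Finset.card_union_le _ _
    _ ≤ Y γ ε + Anum A γ ε := by
        gcongr
        · simp
        · exact (Finset.card_image_le).trans (le_refl _)

end AccBound

section Fins
variable (A : IvAlg) (γ ε : ℝ)

lemma mem_Ihat {x : Iv} :
    x ∈ Ihat γ ε ↔ (∃ i < S ε, x = ph γ ε i) ∨ (∃ m < Y γ ε, x = cl γ ε m) := by
  unfold Ihat
  simp only [Finset.mem_union, Finset.mem_image, Finset.mem_range]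
  constructor
  · rintro (⟨i, hi, rfl⟩ | ⟨m, hm, rfl⟩)
    · exact Or.inl ⟨i, hi, rfl⟩
    · exact Or.inr ⟨m, hm, rfl⟩
  · rintro (⟨i, hi, rfl⟩ | ⟨m, hm, rfl⟩)
    · exact Or.inl ⟨i, hi, rfl⟩
    · exact Or.inr ⟨m, hm, rfl⟩

def HH (i : ℕ) : Finset Iv :=
  if i < S ε then insert (uh γ ε i) (inside A γ ε i).toFinset else {cl γ ε (i - S ε)}

def DH (i : ℕ) : Finset Iv :=
  if resp A γ ε i = true then
    insert (uh γ ε i) ((Finset.range (jj A γ ε i)).image (uu γ ε i))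
  else {uh γ ε i, ph γ ε i}

lemma insideFin {i : ℕ} (h : resp A γ ε i = true) :
    (inside A γ ε i).toFinset =
      insert (ph γ ε i) ((Finset.range (jj A γ ε i)).image (uu γ ε i)) := by
  unfold inside
  rw [if_pos h]
  ext x
  simp

lemma L_toFinset_eq :
    (L A γ ε).toFinset = (Finset.range (S ε + Y γ ε)).biUnion (HH A γ ε) := by
  ext x
  rw [List.mem_toFinset, mem_L]
  simp only [Finset.mem_biUnion, Finset.mem_range]
  constructor
  · rintro (⟨m, hm, rfl⟩ | ⟨i, hi, rfl⟩ | ⟨i, hi, hr, hc⟩)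
    · refine ⟨S ε + m, by omega, ?_⟩
      unfold HH
      rw [if_neg (by omega)]
      simp
    · exact ⟨i, by omega, by unfold HH; rw [if_pos hi]; simp⟩
    · refine ⟨i, by omega, ?_⟩
      unfold HH
      rw [if_pos hi]
      apply Finset.mem_insert_of_mem
      rw [List.mem_toFinset, mem_inside]
      exact ⟨hr, hc⟩
  · rintro ⟨i, hi, hx⟩
    unfold HH at hx
    split at hx
    · next h =>
      rcases Finset.mem_insert.1 hx with rfl | hx'
      · exact Or.inr (Or.inl ⟨i, h, rfl⟩)
      · rw [List.mem_toFinset, mem_inside] at hx'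
        exact Or.inr (Or.inr ⟨i, h, hx'.1, hx'.2⟩)
    · next h =>
      rw [Finset.mem_singleton] at hx
      exact Or.inl ⟨i - S ε, by omega, hx⟩

lemma jj_eq_zero {i : ℕ} (h : resp A γ ε i = false) : jj A γ ε i = 0 := by
  unfold jj
  rw [h]
  simp only [Bool.false_eq_true, if_false, zero_add]
  split
  · next heq =>
    by_cases hne : (Acc A γ ε).Nonempty
    · exfalso
      have : i0 A γ ε ∈ Acc A γ ε := by
        unfold i0; rw [dif_pos hne]; exact Finset.min'_mem _ _
      rw [← heq, Acc, Finset.mem_filter] at this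
      exact absurd this.2 (by rw [h]; simp)
    · have hA0 : Anum A γ ε = 0 := by
        unfold Anum
        rw [Finset.card_eq_zero]
        exact Finset.not_nonempty_iff_eq_empty.1 hne
      unfold G
      rw [if_pos hA0]
      omega
  · rfl

lemma Dfin_eq (hε0 : 0 < ε) :
    ((L A γ ε).toFinset \ Ihat γ ε) ∪ (Ihat γ ε \ (L A γ ε).toFinset) =
      (Finset.range (S ε)).biUnion (DH A γ ε) := by
  ext x
  simp only [Finset.mem_union, Finset.mem_sdiff, Finset.mem_biUnion, Finset.mem_range,
    List.mem_toFinset]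
  constructor
  · rintro (⟨hL, hI⟩ | ⟨hI, hL⟩)
    · rcases (mem_L A γ ε).1 hL with ⟨m, hm, rfl⟩ | ⟨i, hi, rfl⟩ | ⟨i, hi, hr, hc⟩
      · exact absurd ((mem_Ihat γ ε).2 (Or.inr ⟨m, hm, rfl⟩)) hI
      · refine ⟨i, hi, ?_⟩
        unfold DH
        split <;> simp
      · rcases hc with rfl | ⟨t, ht, rfl⟩
        · exact absurd ((mem_Ihat γ ε).2 (Or.inl ⟨i, hi, rfl⟩)) hI
        · refine ⟨i, hi, ?_⟩
          unfold DH
          rw [if_pos hr]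
          apply Finset.mem_insert_of_mem
          exact Finset.mem_image.2 ⟨t, Finset.mem_range.2 ht, rfl⟩
    · rcases (mem_Ihat γ ε).1 hI with ⟨i, hi, rfl⟩ | ⟨m, hm, rfl⟩
      · rcases hr : resp A γ ε i with _ | _
        · refine ⟨i, hi, ?_⟩
          unfold DH
          rw [if_neg (by rw [hr]; simp)]
          simp
        · exfalso
          apply hL
          exact (mem_L A γ ε).2 (Or.inr (Or.inr ⟨i, hi, hr, Or.inl rfl⟩))
      · exfalso
        exact hL ((mem_L A γ ε).2 (Or.inl ⟨m, hm, rfl⟩))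
  · rintro ⟨i, hi, hx⟩
    unfold DH at hx
    split at hx
    · next hr =>
      rcases Finset.mem_insert.1 hx with rfl | hx'
      · left
        refine ⟨(mem_L A γ ε).2 (Or.inr (Or.inl ⟨i, hi, rfl⟩)), ?_⟩
        intro hI
        rcases (mem_Ihat γ ε).1 hI with ⟨i', _, heq⟩ | ⟨m, _, heq⟩
        · exact uh_ne_ph γ ε i i' heq
        · exact uh_ne_cl γ ε i m heq
      · obtain ⟨t, ht, rfl⟩ := Finset.mem_image.1 hx'
        rw [Finset.mem_range] at ht
        left
        refine ⟨(mem_L A γ ε).2 (Or.inr (Or.inr ⟨i, hi, hr, Or.inr ⟨t, ht, rfl⟩⟩)), ?_⟩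
        intro hI
        rcases (mem_Ihat γ ε).1 hI with ⟨i', _, heq⟩ | ⟨m, _, heq⟩
        · exact ph_ne_uu γ ε (by have := jj_le A γ ε hε0 i; omega) heq.symm
        · exact cl_ne_uu γ ε (by have := jj_le A γ ε hε0 i; omega) heq.symm
    · next hr =>
      have hr' : resp A γ ε i = false := by
        cases h : resp A γ ε i
        · rfl
        · exact absurd h hr
      rcases Finset.mem_insert.1 hx with rfl | hx'
      · left
        refine ⟨(mem_L A γ ε).2 (Or.inr (Or.inl ⟨i, hi, rfl⟩)), ?_⟩
        intro hI
        rcases (mem_Ihat γ ε).1 hI with ⟨i', _, heq⟩ | ⟨m, _, heq⟩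
        · exact uh_ne_ph γ ε i i' heq
        · exact uh_ne_cl γ ε i m heq
      · rw [Finset.mem_singleton] at hx'
        subst hx'
        right
        refine ⟨(mem_Ihat γ ε).2 (Or.inl ⟨i, hi, rfl⟩), ?_⟩
        intro hL
        rcases (mem_L A γ ε).1 hL with ⟨m, _, heq⟩ | ⟨i', _, heq⟩ | ⟨i', _, hr2, hc⟩
        · exact ph_ne_cl γ ε hi heq
        · exact uh_ne_ph γ ε i' i heq.symm
        · rcases hc with heq | ⟨t, ht, heq⟩
          · have : i = i' := ph_inj γ ε heq
            rw [← this] at hr2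
            rw [hr2] at hr'
            exact absurd hr' (by simp)
          · exact ph_ne_uu γ ε (by have := jj_le A γ ε hε0 i'; omega) heq

end Fins

section Opts
variable (A : IvAlg) (γ ε : ℝ)

lemma Opt_inner (hε0 : 0 < ε) (i : ℕ) :
    Opt (insert (ph γ ε i) ((Finset.range (jj A γ ε i)).image (uu γ ε i))) =
      jj A γ ε i + 1 := by
  have hbnd : ∀ {t : ℕ}, t < jj A γ ε i → t ≤ Gmax γ ε + 2 := by
    intro t ht; have := jj_le A γ ε hε0 i; omega
  have hphn : ph γ ε i ∉ (Finset.range (jj A γ ε i)).image (uu γ ε i) := by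
    intro hmem
    obtain ⟨t, ht, heq⟩ := Finset.mem_image.1 hmem
    rw [Finset.mem_range] at ht
    exact ph_ne_uu γ ε (hbnd ht) heq.symm
  rw [Opt_pairwise_disjoint]
  · rw [Finset.card_insert_of_notMem hphn, Finset.card_image_of_injOn, Finset.card_range]
    intro t ht t' ht' heq
    rw [Finset.mem_coe, Finset.mem_range] at ht ht'
    exact (uu_inj γ ε (hbnd ht) (hbnd ht') heq).2
  · intro x hx y hy hxy
    rcases Finset.mem_insert.1 hx with rfl | hx' <;> rcases Finset.mem_insert.1 hy with h | hy'
    · subst h; exact absurd rfl hxy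
    · obtain ⟨t, ht, rfl⟩ := Finset.mem_image.1 hy'
      rw [Finset.mem_range] at ht
      exact no_ov_ph_uu γ ε i t
    · obtain ⟨t, ht, rfl⟩ := Finset.mem_image.1 hx'
      rw [Finset.mem_range] at ht
      subst h
      intro hov
      exact no_ov_ph_uu γ ε i t hov.symm
    · obtain ⟨t, ht, rfl⟩ := Finset.mem_image.1 hx'
      obtain ⟨t', ht', rfl⟩ := Finset.mem_image.1 hy'
      rw [Finset.mem_range] at ht ht'
      have : t ≠ t' := fun h => hxy (by rw [h])
      exact no_ov_uu_uu γ ε this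

lemma Opt_HH_lt (hε0 : 0 < ε) {i : ℕ} (hi : i < S ε) :
    Opt (HH A γ ε i) = if resp A γ ε i = true then jj A γ ε i + 1 else 1 := by
  unfold HH
  rw [if_pos hi]
  cases hr : resp A γ ε i
  · simp only [Bool.false_eq_true, if_false]
    have : inside A γ ε i = [] := by unfold inside; rw [hr]; simp
    rw [this]
    simp only [List.toFinset_nil, insert_empty_eq]
    rw [Opt_pairwise_disjoint (by intro x hx y hy hxy; simp at hx hy; subst hx; subst hy; exact absurd rfl hxy)]
    simp
  · simp only [if_true]
    rw [insideFin A γ ε hr]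
    have hbnd : ∀ {t : ℕ}, t < jj A γ ε i → t ≤ Gmax γ ε + 1 := by
      intro t ht; have := jj_le A γ ε hε0 i; omega
    rw [Opt_insert_dom]
    · exact Opt_inner A γ ε hε0 i
    · intro y hy
      rcases Finset.mem_insert.1 hy with rfl | hy'
      · exact ov_uh_ph γ ε i
      · obtain ⟨t, ht, rfl⟩ := Finset.mem_image.1 hy'
        rw [Finset.mem_range] at ht
        exact ov_uh_uu γ ε (hbnd ht)
    · intro hmem
      rcases Finset.mem_insert.1 hmem with h | h
      · exact uh_ne_ph γ ε i i h
      · obtain ⟨t, ht, heq⟩ := Finset.mem_image.1 h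
        rw [Finset.mem_range] at ht
        exact uh_ne_uu γ ε (show t ≤ Gmax γ ε + 2 by have := hbnd ht; omega) heq.symm
    · exact ⟨ph γ ε i, Finset.mem_insert_self _ _⟩

lemma Opt_single (x : Iv) : Opt {x} = 1 := by
  rw [Opt_pairwise_disjoint (by intro a ha b hb hab; simp at ha hb; subst ha; subst hb; exact absurd rfl hab)]
  simp

lemma Opt_HH_ge {i : ℕ} (hi : S ε ≤ i) : Opt (HH A γ ε i) = 1 := by
  unfold HH
  rw [if_neg (by omega)]
  exact Opt_single _

lemma HH_band (hε0 : 0 < ε) : ∀ i < S ε + Y γ ε, ∀ x ∈ HH A γ ε i,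
    B γ ε * i ≤ x.1 ∧ x.1 < x.2 ∧ x.2 ≤ B γ ε * (i + 1) := by
  intro i hi x hx
  unfold HH at hx
  split at hx
  · next h =>
    rcases Finset.mem_insert.1 hx with rfl | hx'
    · exact uh_band γ ε i
    · rw [List.mem_toFinset, mem_inside] at hx'
      rcases hx'.2 with rfl | ⟨t, ht, rfl⟩
      · exact ph_band γ ε i
      · exact uu_band γ ε (by have := jj_le A γ ε hε0 i; omega)
  · next h =>
    rw [Finset.mem_singleton] at hx
    subst hx
    have := cl_band γ ε (i - S ε)
    have heq : S ε + (i - S ε) = i := by omega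
    rwa [heq] at this

lemma sum_split (f : ℕ → ℕ) :
    ∑ i ∈ Finset.range (S ε + Y γ ε), f i =
      (∑ i ∈ Finset.range (S ε), f i) + ∑ m ∈ Finset.range (Y γ ε), f (S ε + m) := by
  have hd : Disjoint (Finset.range (S ε))
      ((Finset.range (Y γ ε)).map (addLeftEmbedding (S ε))) := by
    rw [Finset.disjoint_left]
    intro a ha ha'
    rw [Finset.mem_range] at ha
    obtain ⟨m, hm, heq⟩ := Finset.mem_map.1 ha'
    have : S ε + m = a := heq
    omega
  rw [Finset.range_add, Finset.sum_union hd, Finset.sum_map]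
  rfl

lemma Opt_Iw (hε0 : 0 < ε) (hε1 : ε < 1) :
    Opt ((L A γ ε).toFinset) = D A γ ε := by
  rw [L_toFinset_eq, Opt_biUnion_banded (B γ ε) _ _ (HH_band A γ ε hε0)]
  rw [sum_split]
  have h1 : ∑ i ∈ Finset.range (S ε), Opt (HH A γ ε i) =
      ∑ i ∈ Finset.range (S ε), (jj A γ ε i + 1) := by
    apply Finset.sum_congr rfl
    intro i hi
    rw [Finset.mem_range] at hi
    rw [Opt_HH_lt A γ ε hε0 hi]
    cases hr : resp A γ ε i
    · rw [jj_eq_zero A γ ε hr]; simp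
    · simp
  have h2 : ∑ m ∈ Finset.range (Y γ ε), Opt (HH A γ ε (S ε + m)) = Y γ ε := by
    rw [Finset.sum_congr rfl (fun m _ => Opt_HH_ge A γ ε (by omega))]
    simp
  rw [h1, h2, Finset.sum_add_distrib, sum_jj A γ ε hε0 hε1]
  have hSG := S_le_G A γ ε
  simp only [Finset.sum_const, Finset.card_range, smul_eq_mul, mul_one]
  unfold D cc
  omega

lemma DH_band (hε0 : 0 < ε) : ∀ i < S ε, ∀ x ∈ DH A γ ε i,
    B γ ε * i ≤ x.1 ∧ x.1 < x.2 ∧ x.2 ≤ B γ ε * (i + 1) := by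
  intro i hi x hx
  unfold DH at hx
  split at hx
  · rcases Finset.mem_insert.1 hx with rfl | hx'
    · exact uh_band γ ε i
    · obtain ⟨t, ht, rfl⟩ := Finset.mem_image.1 hx'
      rw [Finset.mem_range] at ht
      exact uu_band γ ε (by have := jj_le A γ ε hε0 i; omega)
  · rcases Finset.mem_insert.1 hx with rfl | hx'
    · exact uh_band γ ε i
    · rw [Finset.mem_singleton] at hx'
      subst hx'
      exact ph_band γ ε i

lemma Opt_DH_val (hε0 : 0 < ε) {i : ℕ} :
    Opt (DH A γ ε i) = if resp A γ ε i = true then jj A γ ε i else 1 := by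
  have hbnd : ∀ {t : ℕ}, t < jj A γ ε i → t ≤ Gmax γ ε + 2 := by
    intro t ht; have := jj_le A γ ε hε0 i; omega
  unfold DH
  cases hr : resp A γ ε i
  · simp only [Bool.false_eq_true, if_false]
    have : ({uh γ ε i, ph γ ε i} : Finset Iv) = insert (uh γ ε i) {ph γ ε i} := rfl
    rw [this, Opt_insert_dom]
    · exact Opt_single _
    · intro y hy
      rw [Finset.mem_singleton] at hy
      subst hy
      exact ov_uh_ph γ ε i
    · intro h
      rw [Finset.mem_singleton] at h
      exact uh_ne_ph γ ε i i h
    · exact ⟨ph γ ε i, Finset.mem_singleton_self _⟩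
  · simp only [if_true]
    have hj := jj_ge_one A γ ε hr
    rw [Opt_insert_dom]
    · rw [Opt_pairwise_disjoint]
      · rw [Finset.card_image_of_injOn, Finset.card_range]
        intro t ht t' ht' heq
        rw [Finset.mem_coe, Finset.mem_range] at ht ht'
        exact (uu_inj γ ε (hbnd ht) (hbnd ht') heq).2
      · intro x hx y hy hxy
        obtain ⟨t, ht, rfl⟩ := Finset.mem_image.1 hx
        obtain ⟨t', ht', rfl⟩ := Finset.mem_image.1 hy
        exact no_ov_uu_uu γ ε (fun h => hxy (by rw [h]))
    · intro y hy
      obtain ⟨t, ht, rfl⟩ := Finset.mem_image.1 hy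
      rw [Finset.mem_range] at ht
      exact ov_uh_uu γ ε (show t ≤ Gmax γ ε + 1 by have := jj_le A γ ε hε0 i; omega)
    · intro h
      obtain ⟨t, ht, heq⟩ := Finset.mem_image.1 h
      rw [Finset.mem_range] at ht
      exact uh_ne_uu γ ε (hbnd ht) heq.symm
    · exact ⟨uu γ ε i 0, Finset.mem_image.2 ⟨0, Finset.mem_range.2 (by omega), rfl⟩⟩

lemma Opt_Delta (hε0 : 0 < ε) (hε1 : ε < 1) :
    Opt (((L A γ ε).toFinset \ Ihat γ ε) ∪ (Ihat γ ε \ (L A γ ε).toFinset)) = G A γ ε := by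
  rw [Dfin_eq A γ ε hε0, Opt_biUnion_banded (B γ ε) _ _ (DH_band A γ ε hε0)]
  have h1 : ∑ i ∈ Finset.range (S ε), Opt (DH A γ ε i) =
      ∑ i ∈ Finset.range (S ε), (jj A γ ε i + (if resp A γ ε i = true then 0 else 1)) := by
    apply Finset.sum_congr rfl
    intro i hi
    rw [Opt_DH_val A γ ε hε0]
    cases hr : resp A γ ε i
    · rw [jj_eq_zero A γ ε hr]; simp
    · simp
  rw [h1, Finset.sum_add_distrib, sum_jj A γ ε hε0 hε1]
  have h2 : ∑ i ∈ Finset.range (S ε), (if resp A γ ε i = true then 0 else 1) =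
      S ε - Anum A γ ε := by
    rw [Finset.sum_ite]
    simp only [Finset.sum_const_zero, Finset.sum_const, smul_eq_mul, mul_one, zero_add]
    have h3 := Finset.card_filter_add_card_filter_not
      (s := Finset.range (S ε)) (p := fun i => resp A γ ε i = true)
    have hA : (Finset.filter (fun i => resp A γ ε i = true) (Finset.range (S ε))).card
        = Anum A γ ε := rfl
    simp only [Finset.card_range] at h3
    rw [hA] at h3
    omega
  rw [h2]
  have hSG := S_le_G A γ ε
  have hAS := Anum_le_S A γ ε
  omega

end Opts

section Arith
variable (A : IvAlg) (γ ε : ℝ)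

lemma gam_ge (hγ0 : 0 ≤ γ) (hε0 : 0 < ε) : γ ≤ gam γ ε ∧ gam γ ε ≤ γ + ε/2 :=
  ⟨le_max_left _ _, max_le (by linarith) (by linarith)⟩

lemma bt_near (hγ1 : γ ≤ 1) (hε0 : 0 < ε) : 1 - γ ≤ bet γ ε ∧ bet γ ε ≤ (1 - γ) + ε/2 :=
  ⟨le_max_left _ _, max_le (by linarith) (by linarith)⟩

lemma gam_bt_sum (hγ0 : 0 ≤ γ) (hγ1 : γ ≤ 1) (hε0 : 0 < ε) (hε1 : ε < 1) :
    gam γ ε + bet γ ε ≤ 1 + ε/2 := by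
  unfold gam bet
  rcases max_cases γ (ε/2) with ⟨h1, _⟩ | ⟨h1, _⟩ <;>
    rcases max_cases (1-γ) (ε/2) with ⟨h2, _⟩ | ⟨h2, _⟩ <;> rw [h1, h2] <;> linarith

lemma S_real_ge (hε0 : 0 < ε) : 4/ε^2 ≤ (S ε : ℝ) := Nat.le_ceil _

lemma D_pos (hε0 : 0 < ε) (hε1 : ε < 1) : 0 < D A γ ε := by
  have h1 := S_gt4 ε hε0 hε1
  have h2 := S_le_G A γ ε
  unfold D
  omega

lemma G_le_D : G A γ ε ≤ D A γ ε := by unfold D; omega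

set_option maxHeartbeats 2000000 in
lemma gamma_close (hγ0 : 0 ≤ γ) (hγ1 : γ ≤ 1) (hε0 : 0 < ε) (hε1 : ε < 1) :
    |((G A γ ε : ℝ)/(D A γ ε : ℝ)) - γ| ≤ ε := by
  have hS4 : 4 < S ε := S_gt4 ε hε0 hε1
  have hSr : 4/ε^2 ≤ (S ε : ℝ) := S_real_ge ε hε0
  have hε2 : 0 < ε^2 := by positivity
  have h2e : (2:ℝ) ≤ 2/ε := by
    rw [le_div_iff₀ hε0]; linarith
  have hSeps : 2/ε ≤ (S ε : ℝ) * (ε/2) := by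
    rw [div_le_iff₀ hε0]
    rw [div_le_iff₀ hε2] at hSr
    nlinarith [hSr]
  have hSe1 : 1 ≤ ε/2 * (S ε : ℝ) := by nlinarith [hSeps, h2e]
  have hS5 : (5:ℝ) ≤ (S ε : ℝ) := by exact_mod_cast hS4
  have hg0 := gam_pos γ ε hε0
  have hg1 := gam_le1 γ ε hγ1 hε1
  have hb0 := bet_pos γ ε hε0
  have hb1 := bet_le1 γ ε hγ0
  have hgγ := gam_ge γ ε hγ0 hε0
  have hbγ := bt_near γ ε hγ1 hε0
  have hsum := gam_bt_sum γ ε hγ0 hγ1 hε0 hε1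
  have hFle : (F γ ε : ℝ) ≤ (S ε : ℝ)/gam γ ε := Nat.floor_le (by positivity)
  have hFgt : (S ε : ℝ)/gam γ ε - 1 < (F γ ε : ℝ) := Nat.sub_one_lt_floor _
  have hSF : S ε ≤ F γ ε := S_le_F γ ε hγ1 hε0 hε1
  have hYr : (Y γ ε : ℝ) = (F γ ε : ℝ) - (S ε : ℝ) := by
    unfold Y
    push_cast [hSF]
    ring
  by_cases hA : Anum A γ ε = 0
  · have hG : G A γ ε = S ε := by unfold G; rw [if_pos hA]
    have hD : D A γ ε = F γ ε := by
      unfold D cc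
      rw [hG, hA]
      have := SY_eq_F γ ε hγ1 hε0 hε1
      omega
    rw [hG, hD]
    have hFpos : (0:ℝ) < (F γ ε : ℝ) := by
      have : 0 < F γ ε := by omega
      exact_mod_cast this
    have hlow : gam γ ε ≤ (S ε : ℝ)/(F γ ε : ℝ) := by
      rw [le_div_iff₀ hFpos]
      calc gam γ ε * (F γ ε : ℝ) ≤ gam γ ε * ((S ε : ℝ)/gam γ ε) := by
            apply mul_le_mul_of_nonneg_left hFle (le_of_lt hg0)
        _ = (S ε : ℝ) := by field_simp
    have hhigh : (S ε : ℝ)/(F γ ε : ℝ) ≤ gam γ ε + ε/2 := by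
      rw [div_le_iff₀ hFpos]
      have h1 : ((S ε : ℝ)/gam γ ε - 1) * (gam γ ε + ε/2) ≤ (F γ ε : ℝ) * (gam γ ε + ε/2) := by
        apply mul_le_mul_of_nonneg_right (le_of_lt hFgt) (by linarith)
      have h2 : (S ε : ℝ) ≤ ((S ε : ℝ)/gam γ ε - 1) * (gam γ ε + ε/2) := by
        have hexp : ((S ε : ℝ)/gam γ ε - 1) * (gam γ ε + ε/2)
            = (S ε : ℝ) + (S ε : ℝ) * (ε/2) / gam γ ε - gam γ ε - ε/2 := by
          field_simp
          ring
        rw [hexp]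
        have h3 : (S ε : ℝ) * (ε/2) ≤ (S ε : ℝ) * (ε/2) / gam γ ε := by
          rw [le_div_iff₀ hg0]
          nlinarith [mul_nonneg (le_of_lt (by positivity : (0:ℝ) < (S ε:ℝ) * (ε/2)))
            (sub_nonneg.2 hg1)]
        nlinarith
      linarith
    rw [abs_le]
    constructor <;> linarith [hgγ.1, hgγ.2]
  · have hA1 : 1 ≤ Anum A γ ε := by omega
    set c := cc A γ ε with hc
    have hc1 : Y γ ε + 1 ≤ c := by rw [hc]; unfold cc; omega
    have hcr : (S ε : ℝ)/gam γ ε - (S ε : ℝ) < (c : ℝ) := by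
      have hcc : ((Y γ ε : ℝ)) + 1 ≤ (c:ℝ) := by exact_mod_cast hc1
      rw [hYr] at hcc
      linarith
    have hcpos : (0:ℝ) < (c:ℝ) := by
      have : (0:ℕ) < c := by omega
      exact_mod_cast this
    set T := ⌈(c : ℝ)/bet γ ε⌉₊ with hT
    have hG : G A γ ε = max (S ε) (T - c) := by
      rw [hc, hT]; unfold G; rw [if_neg hA]
    have hTle : (c:ℝ)/bet γ ε ≤ (T:ℝ) := Nat.le_ceil _
    have hDT : (c:ℝ)/bet γ ε ≤ (D A γ ε : ℝ) := by
      rcases le_or_gt (T - c) (S ε) with hmax | hmax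
      · have hTSc : T ≤ S ε + c := by omega
        have hGS : G A γ ε = S ε := by rw [hG]; omega
        have hTD : T ≤ D A γ ε := by unfold D; rw [hGS, ← hc]; omega
        calc (c:ℝ)/bet γ ε ≤ (T:ℝ) := hTle
          _ ≤ (D A γ ε : ℝ) := by exact_mod_cast hTD
      · have hGS : G A γ ε = T - c := by rw [hG]; omega
        have hDeq : D A γ ε = T := by unfold D; rw [hGS, ← hc]; omega
        rw [hDeq]
        exact hTle
    have hDpos : (0:ℝ) < (D A γ ε : ℝ) := by
      have := D_pos A γ ε hε0 hε1
      exact_mod_cast this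
    have hupper : (c:ℝ)/(D A γ ε : ℝ) ≤ bet γ ε := by
      rw [div_le_iff₀ hDpos]
      calc (c:ℝ) = bet γ ε * ((c:ℝ)/bet γ ε) := by field_simp
        _ ≤ bet γ ε * (D A γ ε : ℝ) := by
            apply mul_le_mul_of_nonneg_left hDT (le_of_lt hb0)
    have h8 : bet γ ε^2/(c:ℝ) ≤ ε/2 := by
      rcases max_cases (1-γ) (ε/2) with ⟨hbe, hbe2⟩ | ⟨hbe, hbe2⟩
      · have hbet : bet γ ε = 1 - γ := hbe
        have h1γ : (0:ℝ) ≤ 1 - γ := by linarith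
        rcases max_cases γ (ε/2) with ⟨hge, hge2⟩ | ⟨hge, hge2⟩
        · -- gam = γ, γ ≥ ε/2 > 0
          have hgam : gam γ ε = γ := hge
          have hγpos : 0 < γ := by rw [← hgam]; exact hg0
          have hcS : (S ε : ℝ) * (1 - γ) ≤ (c:ℝ) := by
            have hx : (S ε:ℝ) * (1-γ) ≤ (S ε:ℝ)/γ - (S ε:ℝ) := by
              rw [← sub_nonneg]
              have hid : (S ε:ℝ)/γ - (S ε:ℝ) - (S ε:ℝ)*(1-γ) = (S ε:ℝ) * ((1-γ)^2) / γ := by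
                field_simp
              rw [hid]
              positivity
            rw [hgam] at hcr
            linarith
          rw [div_le_iff₀ hcpos, hbet]
          have k1 : ε/2 * ((S ε:ℝ)*(1-γ)) ≤ ε/2 * (c:ℝ) :=
            mul_le_mul_of_nonneg_left hcS (by linarith)
          have k2 : 1 * (1-γ) ≤ (ε/2 * (S ε:ℝ)) * (1-γ) :=
            mul_le_mul_of_nonneg_right hSe1 h1γ
          have k0 : (1-γ)^2 ≤ (1-γ) := by nlinarith
          nlinarith [k0, k1, k2]
        · -- gam = ε/2, γ ≤ ε/2
          have hgam : gam γ ε = ε/2 := hge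
          have hcS2 : (S ε : ℝ) ≤ (c:ℝ) := by
            have hd : (S ε:ℝ)*2 ≤ (S ε:ℝ)/(ε/2) := by
              rw [le_div_iff₀ (by linarith : (0:ℝ) < ε/2)]
              nlinarith
            rw [hgam] at hcr
            linarith
          rw [div_le_iff₀ hcpos]
          nlinarith [hSe1, hcS2, hb1, hb0]
      · have hbet : bet γ ε = ε/2 := hbe
        rw [div_le_iff₀ hcpos]
        have hc1r : (1:ℝ) ≤ (c:ℝ) := by
          have : (1:ℕ) ≤ c := by omega
          exact_mod_cast this
        nlinarith [hc1r]
    have hlower : bet γ ε - ε/2 ≤ (c:ℝ)/(D A γ ε : ℝ) ∨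
        1 - gam γ ε ≤ (c:ℝ)/(D A γ ε : ℝ) := by
      rcases le_or_gt (T - c) (S ε) with hmax | hmax
      · right
        have hGS : G A γ ε = S ε := by rw [hG]; omega
        have hDeq : D A γ ε = S ε + c := by unfold D; rw [hGS, ← hc]
        rw [hDeq]
        have hden : (0:ℝ) < ((S ε + c : ℕ):ℝ) := by push_cast; linarith
        rw [le_div_iff₀ hden]
        push_cast
        have h5 : (S ε : ℝ)/gam γ ε * gam γ ε = (S ε : ℝ) := by field_simp
        have hkey : (S ε:ℝ) * (1 - gam γ ε) ≤ gam γ ε * (c:ℝ) := by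
          nlinarith [hcr, hg0]
        nlinarith
      · left
        have hGS : G A γ ε = T - c := by rw [hG]; omega
        have hDeq : D A γ ε = T := by unfold D; rw [hGS, ← hc]; omega
        rw [hDeq]
        have hTlt : (T:ℝ) < (c:ℝ)/bet γ ε + 1 := by
          exact_mod_cast Nat.ceil_lt_add_one (by positivity : (0:ℝ) ≤ (c:ℝ)/bet γ ε)
        have hTpos : (0:ℝ) < (T:ℝ) := by
          have : 0 < T := by omega
          exact_mod_cast this
        have hcan : (c:ℝ)/bet γ ε * bet γ ε = (c:ℝ) := div_mul_cancel₀ _ (ne_of_gt hb0)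
        have hTb : (T:ℝ) * bet γ ε ≤ (c:ℝ) + bet γ ε := by nlinarith [hTlt, hb0, hcan]
        have h6 : bet γ ε * (c:ℝ) / ((c:ℝ) + bet γ ε) ≤ (c:ℝ)/(T:ℝ) := by
          rw [div_le_div_iff₀ (by positivity) hTpos]
          nlinarith [mul_le_mul_of_nonneg_left hTb (le_of_lt hcpos)]
        have e1 : bet γ ε - bet γ ε * (c:ℝ)/((c:ℝ) + bet γ ε) = bet γ ε^2/((c:ℝ) + bet γ ε) := by
          field_simp
          ring
        have e2 : bet γ ε^2/((c:ℝ) + bet γ ε) ≤ bet γ ε^2/(c:ℝ) := by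
          gcongr
          linarith
        linarith [h6, e2, e1.ge, e1.le, h8]
    have hγ'eq : ((G A γ ε : ℝ))/(D A γ ε : ℝ) = 1 - (c:ℝ)/(D A γ ε : ℝ) := by
      have hGD : (G A γ ε : ℝ) = (D A γ ε : ℝ) - (c:ℝ) := by
        have : D A γ ε = G A γ ε + c := by unfold D; rw [← hc]
        rw [this]
        push_cast
        ring
      rw [hGD]
      field_simp
    rw [hγ'eq, abs_le]
    rcases hlower with hl | hl
    · constructor <;> linarith [hbγ.1, hbγ.2, hupper, hε0]
    · constructor <;> linarith [hbγ.1, hbγ.2, hgγ.1, hgγ.2, hsum, hupper]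

end Arith

end ND
end

/-- General upper bound for deterministic interval scheduling with
predictions. For every deterministic online algorithm `A` (whose accepted intervals
are always pairwise non-overlapping), every `0 ≤ γ ≤ 1` and `0 < ε < 1`, there are a
prediction `Ihat` and a sequence `Iw` of distinct intervals with
`ALG(Ihat, Iw) ≤ (1 − γ(Ihat,Iw))·Opt Iw`, `|γ(Ihat,Iw) − γ| ≤ ε` and
`Opt Iw ≥ 1/ε²`, where `γ(Ihat,Iw) = Opt ((Iw \ Ihat) ∪ (Ihat \ Iw)) / Opt Iw`. -/
theorem no_deterministic_better_than_one_sub_gamma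
    (A : IvAlg)
    (hfeasible : ∀ (Ihat : Finset Iv) (I : List Iv), I.Nodup →
      (∀ i ∈ I, i.1 < i.2) →
      ∀ k ∈ accIdx A Ihat I, ∀ k' ∈ accIdx A Ihat I, k ≠ k' →
        ¬ Overlap (I.getD k (0, 1)) (I.getD k' (0, 1)))
    (γ ε : ℝ) (hγ0 : 0 ≤ γ) (hγ1 : γ ≤ 1) (hε0 : 0 < ε) (hε1 : ε < 1) :
    ∃ (Ihat : Finset Iv) (Iw : List Iv), Iw.Nodup ∧
      (∀ i ∈ Iw, i.1 < i.2) ∧ (∀ i ∈ Ihat, i.1 < i.2) ∧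
      (((accIdx A Ihat Iw).card : ℝ) ≤
        (1 - (Opt ((Iw.toFinset \ Ihat) ∪ (Ihat \ Iw.toFinset)) : ℝ) /
              (Opt Iw.toFinset : ℝ)) * (Opt Iw.toFinset : ℝ)) ∧
      |((Opt ((Iw.toFinset \ Ihat) ∪ (Ihat \ Iw.toFinset)) : ℝ) /
          (Opt Iw.toFinset : ℝ)) - γ| ≤ ε ∧
      (1 / ε ^ 2 : ℝ) ≤ (Opt Iw.toFinset : ℝ) := by
  have hOpt : Opt ((ND.L A γ ε).toFinset) = ND.D A γ ε := ND.Opt_Iw A γ ε hε0 hε1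
  have hDel : Opt (((ND.L A γ ε).toFinset \ ND.Ihat γ ε) ∪
      (ND.Ihat γ ε \ (ND.L A γ ε).toFinset)) = ND.G A γ ε := ND.Opt_Delta A γ ε hε0 hε1
  have hDpos : 0 < ND.D A γ ε := ND.D_pos A γ ε hε0 hε1
  have hD0 : (0:ℝ) < (ND.D A γ ε : ℝ) := by exact_mod_cast hDpos
  have hGD : ND.G A γ ε ≤ ND.D A γ ε := ND.G_le_D A γ ε
  refine ⟨ND.Ihat γ ε, ND.L A γ ε, ND.L_nodup A γ ε hε0, ND.L_valid A γ ε,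
    ND.Ihat_valid γ ε, ?_, ?_, ?_⟩
  · rw [hOpt, hDel]
    have ha : (accIdx A (ND.Ihat γ ε) (ND.L A γ ε)).card ≤ ND.Y γ ε + ND.Anum A γ ε :=
      ND.accIdx_card_le A γ ε hε0 hfeasible
    have hexp : (1 - (ND.G A γ ε : ℝ)/(ND.D A γ ε : ℝ)) * (ND.D A γ ε : ℝ)
        = (ND.D A γ ε : ℝ) - (ND.G A γ ε : ℝ) := by
      rw [sub_mul, one_mul, div_mul_cancel₀ _ (ne_of_gt hD0)]
    rw [hexp]
    have hDeq : ND.D A γ ε = ND.G A γ ε + (ND.Anum A γ ε + ND.Y γ ε) := rfl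
    have hcard : (accIdx A (ND.Ihat γ ε) (ND.L A γ ε)).card + ND.G A γ ε ≤ ND.D A γ ε := by
      omega
    have := (Nat.cast_le (α := ℝ)).2 hcard
    push_cast at this
    linarith
  · rw [hOpt, hDel]
    exact ND.gamma_close A γ ε hγ0 hγ1 hε0 hε1
  · rw [hOpt]
    have h1 : (4:ℝ)/ε^2 ≤ (ND.S ε : ℝ) := ND.S_real_ge ε hε0
    have h2 : ND.S ε ≤ ND.D A γ ε := le_trans (ND.S_le_G A γ ε) hGD
    have h2' : (ND.S ε : ℝ) ≤ (ND.D A γ ε : ℝ) := by exact_mod_cast h2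
    have hε2 : (0:ℝ) < ε^2 := by positivity
    have h3 : (1:ℝ)/ε^2 ≤ 4/ε^2 := by
      gcongr
      · norm_num
    linarith
end

section
/- For every finite prediction set Î of intervals and every finite sequence I = r_1, …, r_n of distinct intervals, the algorithm TrustGreedy satisfies TrustGreedy(Î, I) ≥ Opt(I) − Opt((I \ Î) ∪ (Î \ I)), where I is also regarded as the set {r_1, …, r_n}. Equivalently, TrustGreedy is (1 − γ)-competitive for online interval scheduling, where γ = Opt((I \ Î) ∪ (Î \ I))/Opt(I), matching the general upper bound for deterministic algorithms. -/
open scoped Classical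

/-- The interval of `S` with minimum right endpoint, ties broken by the fixed rule of
taking the minimum left endpoint (obtained as the lexicographic minimum of
`(right endpoint, left endpoint)`). -/
def efPick (S : Finset Iv) (h : S.Nonempty) : Iv :=
  let m := (S.image fun i => toLex (i.2, i.1)).min' (h.image _)
  ((ofLex m).2, (ofLex m).1)

/-- Fuelled version of the earliest-finish greedy construction: repeatedly add an
interval with minimum right endpoint among the intervals overlapping no
already-selected interval. -/
def efGreedyAux : ℕ → Finset Iv → Finset Iv
  | 0, _ => ∅
  | fuel + 1, S =>
    if h : S.Nonempty then
      let r := efPick S h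
      insert r (efGreedyAux fuel (S.filter fun i => i ≠ r ∧ ¬ Overlap i r))
    else ∅

/-- The earliest-finish greedy optimal solution `I*` of a prediction set. -/
def efGreedy (S : Finset Iv) : Finset Iv := efGreedyAux S.card S

/-- One step of TrustGreedy: the state is the pair `(A, Acc)` of the current plan and
the set of accepted intervals, and `r` is the arriving request. -/
noncomputable def tgStep (Ihat : Finset Iv) (st : Finset Iv × Finset Iv) (r : Iv) :
    Finset Iv × Finset Iv :=
  if r ∈ st.1 then (st.1, insert r st.2)
  else if r ∉ Ihat ∧ (∀ i ∈ st.2, ¬ Overlap i r) ∧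
      (st.1.filter fun i => Overlap i r).card ≤ 1 ∧
      (∀ i ∈ st.1.filter fun i => Overlap i r, r.2 ≤ i.2) then
    ((st.1 \ st.1.filter fun i => Overlap i r) ∪ {r}, insert r st.2)
  else st

/-- The number of requests accepted by TrustGreedy on the request sequence `I` with
prediction `Ihat`: the plan starts as the earliest-finish greedy optimal solution of
`Ihat` and the requests are processed in order. -/
noncomputable def TrustGreedy (Ihat : Finset Iv) (I : List Iv) : ℕ :=
  (I.foldl (tgStep Ihat) (efGreedy Ihat, ∅)).2.card


/- ### Auxiliary lemmas -/

/- ### basic geometry -/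

lemma overlap_iff {a b : Iv} :
    Overlap a b ↔ (a.1 < a.2 ∧ a.1 < b.2) ∧ b.1 < a.2 ∧ b.1 < b.2 := by
  unfold Overlap
  rw [max_lt_iff, lt_min_iff, lt_min_iff]

lemma overlap_comm {a b : Iv} (h : Overlap a b) : Overlap b a := by
  rw [overlap_iff] at h ⊢; tauto

lemma overlap_self {a : Iv} (h : a.1 < a.2) : Overlap a a := by
  rw [overlap_iff]; exact ⟨⟨h, h⟩, h, h⟩

/-- An interval overlapping two non-overlapping intervals reaches beyond the
right endpoint of one of them. -/
lemma two_disjoint {x a b : Iv} (hab : ¬ Overlap a b)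
    (hxa : Overlap x a) (hxb : Overlap x b) : a.2 < x.2 ∨ b.2 < x.2 := by
  rw [overlap_iff] at hxa hxb
  rw [overlap_iff] at hab
  omega

/-- Endpoint-injectivity: a common "witness" for two non-overlapping intervals
is impossible. -/
lemma wit_inj {w t t' : Iv} (ht : t.1 < t.2) (ht' : t'.1 < t'.2)
    (hno : ¬ Overlap t t') (h1 : Overlap w t) (e1 : w.2 ≤ t.2)
    (h2 : Overlap w t') (e2 : w.2 ≤ t'.2) : False := by
  rw [overlap_iff] at h1 h2
  rw [overlap_iff] at hno
  omega

/-- The geometric core of the key impossibility lemma H1. -/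
lemma h1_geom {t t1 c w x : Iv}
    (ht : t.1 < t.2) (ht1 : t1.1 < t1.2) (hc : c.1 < c.2)
    (htt1 : ¬ Overlap t t1)
    (hwt : Overlap w t) (hwte : w.2 ≤ t.2)
    (hcw : Overlap c w) (hcwe : c.2 ≤ w.2)
    (hct1 : Overlap c t1) (hct1e : c.2 ≤ t1.2)
    (hxt1 : Overlap x t1) (hxbig : t1.2 < x.2) :
    Overlap w x := by
  rw [overlap_iff] at hwt hcw hct1 hxt1 ⊢
  rw [overlap_iff] at htt1
  omega

/- ### efPick lemmas -/

lemma efPick_mem (S : Finset Iv) (h : S.Nonempty) : efPick S h ∈ S := by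
  unfold efPick
  have hm := Finset.min'_mem (S.image fun i => toLex (i.2, i.1)) (h.image _)
  rw [Finset.mem_image] at hm
  obtain ⟨i, hi, him⟩ := hm
  rw [← him]
  simpa using hi

lemma efPick_le (S : Finset Iv) (h : S.Nonempty) {y : Iv} (hy : y ∈ S) :
    (efPick S h).2 ≤ y.2 := by
  unfold efPick
  have hm := Finset.min'_le (S.image fun i => toLex (i.2, i.1))
    (toLex (y.2, y.1)) (Finset.mem_image_of_mem _ hy)
  set m := (S.image fun i => toLex (i.2, i.1)).min' (h.image _) with hmdef
  have h2 : toLex (ofLex m) ≤ toLex (y.2, y.1) := by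
    rw [toLex_ofLex]; exact hm
  rw [Prod.Lex.le_iff] at h2
  rcases h2 with h2 | ⟨h2, _⟩
  · exact le_of_lt h2
  · exact le_of_eq h2

/- ### efGreedyAux lemmas -/

lemma efGreedyAux_subset : ∀ (fuel : ℕ) (S : Finset Iv), efGreedyAux fuel S ⊆ S := by
  intro fuel
  induction fuel with
  | zero => intro S; simp [efGreedyAux]
  | succ n ih =>
    intro S
    rw [efGreedyAux]
    split_ifs with h
    · intro x hx
      rcases Finset.mem_insert.mp hx with hx | hx
      · rw [hx]; exact efPick_mem S h
      · exact Finset.filter_subset _ _ (ih _ hx)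
    · simp

lemma efGreedyAux_nonov : ∀ (fuel : ℕ) (S : Finset Iv),
    NonOverlapping (efGreedyAux fuel S) := by
  intro fuel
  induction fuel with
  | zero => intro S; simp [efGreedyAux, NonOverlapping]
  | succ n ih =>
    intro S
    rw [efGreedyAux]
    split_ifs with h
    · intro i hi j hj hij
      rcases Finset.mem_insert.mp hi with hi | hi <;>
        rcases Finset.mem_insert.mp hj with hj | hj
      · exact absurd (hi.trans hj.symm) hij
      · have := Finset.mem_filter.mp (efGreedyAux_subset _ _ hj)
        rw [hi]
        exact fun hov => this.2.2 (overlap_comm hov)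
      · have := Finset.mem_filter.mp (efGreedyAux_subset _ _ hi)
        rw [hj]
        exact this.2.2
      · exact ih _ i hi j hj hij
    · simp [NonOverlapping]

lemma efGreedyAux_wit : ∀ (fuel : ℕ) (S : Finset Iv), S.card ≤ fuel →
    ∀ y ∈ S, ∃ d ∈ efGreedyAux fuel S, (d = y ∨ Overlap d y) ∧ d.2 ≤ y.2 := by
  intro fuel
  induction fuel with
  | zero =>
    intro S hS y hy
    rw [Nat.le_zero, Finset.card_eq_zero] at hS
    simp [hS] at hy
  | succ n ih =>
    intro S hS y hy
    have hne : S.Nonempty := ⟨y, hy⟩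
    rw [efGreedyAux]
    rw [dif_pos hne]
    set r := efPick S hne with hrdef
    by_cases hyf : y ∈ S.filter fun i => i ≠ r ∧ ¬ Overlap i r
    · have hcard : (S.filter fun i => i ≠ r ∧ ¬ Overlap i r).card ≤ n := by
        have hlt : (S.filter fun i => i ≠ r ∧ ¬ Overlap i r).card < S.card := by
          apply Finset.card_lt_card
          constructor
          · exact Finset.filter_subset _ _
          · intro hsub
            have := Finset.mem_filter.mp (hsub (efPick_mem S hne))
            exact this.2.1 rfl
        omega
      obtain ⟨d, hd, hprop⟩ := ih _ hcard y hyf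
      exact ⟨d, Finset.mem_insert_of_mem hd, hprop⟩
    · rw [Finset.mem_filter, not_and, not_and_or, not_not] at hyf
      have h2 := hyf hy
      refine ⟨r, Finset.mem_insert_self _ _, ?_, efPick_le S hne hy⟩
      rcases h2 with h2 | h2
      · exact Or.inl h2.symm
      · exact Or.inr (overlap_comm (not_not.mp h2))

lemma efGreedy_subset (S : Finset Iv) : efGreedy S ⊆ S := efGreedyAux_subset _ _

lemma efGreedy_nonov (S : Finset Iv) : NonOverlapping (efGreedy S) :=
  efGreedyAux_nonov _ _

lemma efGreedy_wit (S : Finset Iv) :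
    ∀ y ∈ S, ∃ d ∈ efGreedy S, (d = y ∨ Overlap d y) ∧ d.2 ≤ y.2 :=
  efGreedyAux_wit _ _ le_rfl

/- ### Opt lemmas -/

lemma card_le_Opt {T S : Finset Iv} (hT : T ⊆ S) (h : NonOverlapping T) :
    T.card ≤ Opt S :=
  Finset.le_sup (by
    rw [Finset.mem_filter, Finset.mem_powerset]; exact ⟨hT, h⟩)

lemma Opt_exists (S : Finset Iv) :
    ∃ T, T ⊆ S ∧ NonOverlapping T ∧ T.card = Opt S := by
  have hne : (S.powerset.filter fun T => NonOverlapping T).Nonempty := by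
    refine ⟨∅, ?_⟩
    rw [Finset.mem_filter, Finset.mem_powerset]
    exact ⟨Finset.empty_subset _, by intro i hi; simp at hi⟩
  obtain ⟨T, hT, hsup⟩ := Finset.exists_mem_eq_sup _ hne Finset.card
  rw [Finset.mem_filter, Finset.mem_powerset] at hT
  exact ⟨T, hT.1, hT.2, hsup.symm⟩

/- ### The invariant -/

structure TGInv (Ihat P A Acc : Finset Iv) : Prop where
  accA : Acc ⊆ A
  accP : Acc ⊆ P
  nonov : NonOverlapping A
  asub : A ⊆ efGreedy Ihat ∪ Acc
  fresh : ∀ a ∈ A, a ∉ Acc → a ∉ P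
  hist : ∃ (R : Finset Iv) (f : Iv → Iv),
      R ⊆ efGreedy Ihat ∧ (∀ i ∈ R, i ∉ A) ∧
      (∀ i ∈ R, f i ∈ Acc ∧ f i ∉ Ihat ∧ Overlap (f i) i ∧ (f i).2 ≤ i.2) ∧
      Set.InjOn f ↑R ∧
      (∀ w ∈ efGreedy Ihat, w ∈ A ∨ w ∈ R) ∧
      ∀ t ∈ P, t ∉ Acc →
        (∃ w, (w ∈ A ∨ w ∈ R) ∧ Overlap w t ∧ w.2 ≤ t.2) ∨
        (t ∉ Ihat ∧ ∃ c ∈ Acc, Overlap c t)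

lemma tgInv_init (Ihat : Finset Iv) : TGInv Ihat ∅ (efGreedy Ihat) ∅ where
  accA := Finset.empty_subset _
  accP := Finset.empty_subset _
  nonov := efGreedy_nonov Ihat
  asub := Finset.subset_union_left
  fresh := fun a _ _ => Finset.notMem_empty a
  hist := ⟨∅, id, Finset.empty_subset _, fun i hi => absurd hi (Finset.notMem_empty i),
    fun i hi => absurd hi (Finset.notMem_empty i), by simp [Set.InjOn],
    fun w hw => Or.inl hw, fun t ht => absurd ht (Finset.notMem_empty t)⟩

lemma tgInv_step {Ihat P A Acc : Finset Iv} {r : Iv}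
    (inv : TGInv Ihat P A Acc) (hrP : r ∉ P) (hrv : r.1 < r.2) :
    TGInv Ihat (insert r P) (tgStep Ihat (A, Acc) r).1 (tgStep Ihat (A, Acc) r).2 := by
  have hrAcc : r ∉ Acc := fun h => hrP (inv.accP h)
  obtain ⟨R, f, hR1, hR2, hR3, hR4, hR5, hR6⟩ := inv.hist
  unfold tgStep
  simp only
  split_ifs with hmem hC
  · -- plain accept
    exact {
      accA := Finset.insert_subset hmem inv.accA
      accP := Finset.insert_subset_insert r inv.accP
      nonov := inv.nonov
      asub := inv.asub.trans
        (Finset.union_subset_union_right (Finset.subset_insert _ _))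
      fresh := by
        intro a ha hna
        rw [Finset.mem_insert, not_or] at hna ⊢
        exact ⟨hna.1, inv.fresh a ha hna.2⟩
      hist := by
        refine ⟨R, f, hR1, hR2, fun i hi => ?_, hR4, hR5, ?_⟩
        · obtain ⟨q1, q2, q3, q4⟩ := hR3 i hi
          exact ⟨Finset.mem_insert_of_mem q1, q2, q3, q4⟩
        · intro t ht htn
          rcases Finset.mem_insert.mp ht with rfl | ht
          · exact absurd (Finset.mem_insert_self t Acc) htn
          · have htn' : t ∉ Acc := fun h => htn (Finset.mem_insert_of_mem h)
            rcases hR6 t ht htn' with h | ⟨h1, c, hc, hov⟩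
            · exact Or.inl h
            · exact Or.inr ⟨h1, c, Finset.mem_insert_of_mem hc, hov⟩ }
  · -- swap accept
    obtain ⟨hC1, hC2, hC3, hC4⟩ := hC
    set B := A.filter fun i => Overlap i r with hBdef
    have hAccB : ∀ c ∈ Acc, c ∉ B := by
      intro c hc hcB
      exact hC2 c hc (Finset.mem_filter.mp hcB).2
    have hBIstar : B ⊆ efGreedy Ihat := by
      intro b hb
      have hbA : b ∈ A := (Finset.mem_filter.mp hb).1
      rcases Finset.mem_union.mp (inv.asub hbA) with h | h
      · exact h
      · exact absurd hb (hAccB b h)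
    exact {
      accA := by
        intro c hc
        rcases Finset.mem_insert.mp hc with rfl | hc
        · exact Finset.mem_union_right _ (Finset.mem_singleton_self c)
        · exact Finset.mem_union_left _
            (Finset.mem_sdiff.mpr ⟨inv.accA hc, hAccB c hc⟩)
      accP := Finset.insert_subset_insert r inv.accP
      nonov := by
        intro i hi j hj hij
        rcases Finset.mem_union.mp hi with hi | hi <;>
          rcases Finset.mem_union.mp hj with hj | hj
        · exact inv.nonov i (Finset.mem_sdiff.mp hi).1 j (Finset.mem_sdiff.mp hj).1 hij
        · rw [Finset.mem_singleton] at hj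
          subst hj
          intro hov
          exact (Finset.mem_sdiff.mp hi).2
            (Finset.mem_filter.mpr ⟨(Finset.mem_sdiff.mp hi).1, hov⟩)
        · rw [Finset.mem_singleton] at hi
          subst hi
          intro hov
          exact (Finset.mem_sdiff.mp hj).2
            (Finset.mem_filter.mpr ⟨(Finset.mem_sdiff.mp hj).1, overlap_comm hov⟩)
        · rw [Finset.mem_singleton] at hi hj
          exact absurd (hi.trans hj.symm) hij
      asub := by
        apply Finset.union_subset
        · exact (Finset.sdiff_subset.trans inv.asub).trans
            (Finset.union_subset_union_right (Finset.subset_insert _ _))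
        · intro x hx
          rw [Finset.mem_singleton] at hx
          subst hx
          exact Finset.mem_union_right _ (Finset.mem_insert_self _ _)
      fresh := by
        intro a ha hna
        rcases Finset.mem_union.mp ha with ha | ha
        · have haA : a ∈ A := (Finset.mem_sdiff.mp ha).1
          have hna' : a ∉ Acc := fun h => hna (Finset.mem_insert_of_mem h)
          rw [Finset.mem_insert, not_or]
          exact ⟨fun h => hmem (h ▸ haA), inv.fresh a haA hna'⟩
        · rw [Finset.mem_singleton] at ha
          subst ha
          exact absurd (Finset.mem_insert_self a Acc) hna
      hist := by
        refine ⟨R ∪ B, fun x => if x ∈ B then r else f x, Finset.union_subset hR1 hBIstar,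
          ?_, ?_, ?_, ?_, ?_⟩
        · intro i hi hiA'
          rcases Finset.mem_union.mp hiA' with h | h
          · rcases Finset.mem_union.mp hi with hi | hi
            · exact hR2 i hi (Finset.mem_sdiff.mp h).1
            · exact (Finset.mem_sdiff.mp h).2 hi
          · rw [Finset.mem_singleton] at h
            subst h
            rcases Finset.mem_union.mp hi with hi | hi
            · exact hC1 (efGreedy_subset Ihat (hR1 hi))
            · exact hmem (Finset.mem_filter.mp hi).1
        · intro i hi
          dsimp only
          by_cases hiB : i ∈ B
          · rw [if_pos hiB]
            exact ⟨Finset.mem_insert_self _ _, hC1,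
              overlap_comm (Finset.mem_filter.mp hiB).2, hC4 i hiB⟩
          · rw [if_neg hiB]
            have hiR : i ∈ R := by
              rcases Finset.mem_union.mp hi with h | h
              · exact h
              · exact absurd h hiB
            obtain ⟨q1, q2, q3, q4⟩ := hR3 i hiR
            exact ⟨Finset.mem_insert_of_mem q1, q2, q3, q4⟩
        · intro x hx y hy hxy
          simp only [Finset.coe_union, Set.mem_union, Finset.mem_coe] at hx hy
          dsimp only at hxy
          by_cases hxB : x ∈ B <;> by_cases hyB : y ∈ B
          · exact Finset.card_le_one.mp hC3 x hxB y hyB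
          · rw [if_pos hxB, if_neg hyB] at hxy
            have hyR : y ∈ R := by tauto
            exact absurd ((hR3 y hyR).1) (hxy ▸ hrAcc)
          · rw [if_neg hxB, if_pos hyB] at hxy
            have hxR : x ∈ R := by tauto
            exact absurd ((hR3 x hxR).1) (hxy.symm ▸ hrAcc)
          · rw [if_neg hxB, if_neg hyB] at hxy
            have hxR : x ∈ R := by tauto
            have hyR : y ∈ R := by tauto
            exact hR4 (by exact_mod_cast hxR) (by exact_mod_cast hyR) hxy
        · intro w hw
          rcases hR5 w hw with h | h
          · by_cases hwB : w ∈ B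
            · exact Or.inr (Finset.mem_union_right _ hwB)
            · exact Or.inl (Finset.mem_union_left _ (Finset.mem_sdiff.mpr ⟨h, hwB⟩))
          · exact Or.inr (Finset.mem_union_left _ h)
        · intro t ht htn
          rcases Finset.mem_insert.mp ht with rfl | ht
          · exact absurd (Finset.mem_insert_self t Acc) htn
          · have htn' : t ∉ Acc := fun h => htn (Finset.mem_insert_of_mem h)
            rcases hR6 t ht htn' with ⟨w, hw, hov, hle⟩ | ⟨h1, c, hc, hov⟩
            · refine Or.inl ⟨w, ?_, hov, hle⟩
              rcases hw with hw | hw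
              · by_cases hwB : w ∈ B
                · exact Or.inr (Finset.mem_union_right _ hwB)
                · exact Or.inl (Finset.mem_union_left _ (Finset.mem_sdiff.mpr ⟨hw, hwB⟩))
              · exact Or.inr (Finset.mem_union_left _ hw)
            · exact Or.inr ⟨h1, c, Finset.mem_insert_of_mem hc, hov⟩ }
  · -- reject
    refine {
      accA := inv.accA
      accP := inv.accP.trans (Finset.subset_insert _ _)
      nonov := inv.nonov
      asub := inv.asub
      fresh := ?_
      hist := ?_ }
    · intro a ha hna
      rw [Finset.mem_insert, not_or]
      exact ⟨fun h => hmem (h ▸ ha), inv.fresh a ha hna⟩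
    · refine ⟨R, f, hR1, hR2, hR3, hR4, hR5, ?_⟩
      intro t ht htn
      rcases Finset.mem_insert.mp ht with rfl | ht
      · -- the rejected request t = r
        by_cases hIh : t ∈ Ihat
        · obtain ⟨d, hd, hdp, hdle⟩ := efGreedy_wit Ihat t hIh
          rcases hR5 d hd with hdA | hdR
          · rcases hdp with rfl | hov
            · exact absurd hdA hmem
            · exact Or.inl ⟨d, Or.inl hdA, hov, hdle⟩
          · rcases hdp with rfl | hov
            · exact Or.inl ⟨d, Or.inr hdR, overlap_self hrv, le_rfl⟩
            · exact Or.inl ⟨d, Or.inr hdR, hov, hdle⟩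
        · by_cases hAccOv : ∃ c ∈ Acc, Overlap c t
          · exact Or.inr ⟨hIh, hAccOv⟩
          · have hC2' : ∀ i ∈ Acc, ¬ Overlap i t := by push_neg at hAccOv; exact hAccOv
            by_cases hcard : (A.filter fun i => Overlap i t).card ≤ 1
            · have hnall : ¬ ∀ i ∈ A.filter (fun i => Overlap i t), t.2 ≤ i.2 := by
                intro hall
                exact hC ⟨hIh, hC2', hcard, hall⟩
              push_neg at hnall
              obtain ⟨i, hiB, hile⟩ := hnall
              have hiA : i ∈ A := (Finset.mem_filter.mp hiB).1
              have hiov : Overlap i t := (Finset.mem_filter.mp hiB).2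
              exact Or.inl ⟨i, Or.inl hiA, hiov, le_of_lt hile⟩
            · have h2 : 1 < (A.filter fun i => Overlap i t).card := lt_of_not_ge hcard
              obtain ⟨a, ha, b, hb, hab⟩ := Finset.one_lt_card.mp h2
              have haA : a ∈ A := (Finset.mem_filter.mp ha).1
              have hbA : b ∈ A := (Finset.mem_filter.mp hb).1
              have haov : Overlap a t := (Finset.mem_filter.mp ha).2
              have hbov : Overlap b t := (Finset.mem_filter.mp hb).2
              have hnab : ¬ Overlap a b := inv.nonov a haA b hbA hab
              rcases two_disjoint hnab (overlap_comm haov) (overlap_comm hbov) with h | h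
              · exact Or.inl ⟨a, Or.inl haA, haov, le_of_lt h⟩
              · exact Or.inl ⟨b, Or.inl hbA, hbov, le_of_lt h⟩
      · exact hR6 t ht htn

/- ### folding -/

lemma tgInv_fold (Ihat : Finset Iv) :
    ∀ (L : List Iv) (P : Finset Iv) (st : Finset Iv × Finset Iv),
      TGInv Ihat P st.1 st.2 → (∀ l ∈ L, l ∉ P) → L.Nodup →
      (∀ l ∈ L, l.1 < l.2) →
      TGInv Ihat (P ∪ L.toFinset) (L.foldl (tgStep Ihat) st).1
        (L.foldl (tgStep Ihat) st).2 := by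
  intro L
  induction L with
  | nil => intro P st h _ _ _; simpa using h
  | cons r L ih =>
    intro P st hInv hLP hnd hv
    have hrP : r ∉ P := hLP r List.mem_cons_self
    have hrv : r.1 < r.2 := hv r List.mem_cons_self
    have hstep := tgInv_step (A := st.1) (Acc := st.2) hInv hrP hrv
    have hfold := ih (insert r P) (tgStep Ihat st r)
      (by simpa using hstep)
      (by
        intro l hl
        rw [Finset.mem_insert, not_or]
        have hlr : l ≠ r := by
          rintro rfl
          exact (List.nodup_cons.mp hnd).1 hl
        exact ⟨hlr, hLP l (List.mem_cons_of_mem r hl)⟩)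
      (List.nodup_cons.mp hnd).2
      (fun l hl => hv l (List.mem_cons_of_mem r hl))
    have heq : insert r P ∪ L.toFinset = P ∪ (r :: L).toFinset := by
      rw [List.toFinset_cons]
      ext x
      simp only [Finset.mem_union, Finset.mem_insert]
      tauto
    rw [heq] at hfold
    simpa using hfold


/-- TrustGreedy is `(1 − γ)`-competitive: for every prediction
`Ihat` and every sequence `I` of distinct intervals,
`TrustGreedy(Ihat, I) ≥ Opt I − Opt ((I \ Ihat) ∪ (Ihat \ I))`. -/
theorem trustGreedy_competitive
    (Ihat : Finset Iv) (I : List Iv) (hnd : I.Nodup)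
    (hI : ∀ i ∈ I, i.1 < i.2) (hIhat : ∀ i ∈ Ihat, i.1 < i.2) :
    Opt I.toFinset - Opt ((I.toFinset \ Ihat) ∪ (Ihat \ I.toFinset)) ≤
      TrustGreedy Ihat I := by
  classical
  set J := I.toFinset with hJdef
  set Δ := (J \ Ihat) ∪ (Ihat \ J) with hDeltadef
  have hfold := tgInv_fold Ihat I ∅ (efGreedy Ihat, ∅) (tgInv_init Ihat)
    (fun l _ => Finset.notMem_empty l) hnd hI
  rw [Finset.empty_union] at hfold
  set st := I.foldl (tgStep Ihat) (efGreedy Ihat, ∅) with hstdef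
  set A := st.1 with hAdef
  set Acc := st.2 with hAccdef
  -- hfold : TGInv Ihat J A Acc
  obtain ⟨R, fR, hR1, hR2, hR3, hR4, hR5, hR6⟩ := hfold.hist
  have hAccA : Acc ⊆ A := hfold.accA
  have hAccJ : Acc ⊆ J := hfold.accP
  have hnovA : NonOverlapping A := hfold.nonov
  have hJv : ∀ t ∈ J, t.1 < t.2 := fun t ht => hI t (List.mem_toFinset.mp ht)
  -- A \ Acc elements are unarrived predictions
  have hAnAcc : ∀ a ∈ A, a ∉ Acc → a ∈ efGreedy Ihat ∧ a ∉ J := by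
    intro a ha hna
    refine ⟨?_, hfold.fresh a ha hna⟩
    rcases Finset.mem_union.mp (hfold.asub ha) with h | h
    · exact h
    · exact absurd h hna
  have hAnAccD : ∀ a ∈ A, a ∉ Acc → a ∈ Δ := by
    intro a ha hna
    obtain ⟨h1, h2⟩ := hAnAcc a ha hna
    exact Finset.mem_union_right _
      (Finset.mem_sdiff.mpr ⟨efGreedy_subset Ihat h1, h2⟩)
  have hAv : ∀ a ∈ A, a.1 < a.2 := by
    intro a ha
    rcases Finset.mem_union.mp (hfold.asub ha) with h | h
    · exact hIhat a (efGreedy_subset Ihat h)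
    · exact hJv a (hAccJ h)
  have hRv : ∀ i ∈ R, i.1 < i.2 := fun i hi => hIhat i (efGreedy_subset Ihat (hR1 hi))
  have hfRD : ∀ i ∈ R, fR i ∈ Δ := by
    intro i hi
    exact Finset.mem_union_left _
      (Finset.mem_sdiff.mpr ⟨hAccJ (hR3 i hi).1, (hR3 i hi).2.1⟩)
  -- the fixed non-overlapping Δ-certificate and eliminator map
  set D := efGreedy Δ with hDdef
  have hE : ∀ y ∈ Δ, ∃ d, d ∈ D ∧ (d = y ∨ Overlap d y) ∧ d.2 ≤ y.2 := by
    intro y hy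
    obtain ⟨d, hd, hp⟩ := efGreedy_wit Δ y hy
    exact ⟨d, hd, hp⟩
  set E : Iv → Iv := fun y =>
    if h : ∃ d, d ∈ D ∧ (d = y ∨ Overlap d y) ∧ d.2 ≤ y.2 then h.choose else y
    with hEdef
  have hEspec : ∀ y ∈ Δ, E y ∈ D ∧ (E y = y ∨ Overlap (E y) y) ∧ (E y).2 ≤ y.2 := by
    intro y hy
    have hex := hE y hy
    rw [hEdef]
    dsimp only
    rw [dif_pos hex]
    exact hex.choose_spec
  -- Elim-equality forces the two pens to be equal or overlapping
  have hEinj : ∀ p ∈ Δ, ∀ p' ∈ Δ, E p = E p' → p = p' ∨ Overlap p p' := by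
    intro p hp p' hp' heq
    by_contra hcon
    push_neg at hcon
    obtain ⟨hne, hnov⟩ := hcon
    obtain ⟨hD1, hp1, hp2⟩ := hEspec p hp
    obtain ⟨hD1', hp1', hp2'⟩ := hEspec p' hp'
    rw [heq] at hp1 hp2
    rcases hp1 with h | h <;> rcases hp1' with h' | h'
    · exact hne (h.symm.trans h')
    · rw [h] at h'; exact hnov h'
    · rw [h'] at h; exact hnov (overlap_comm h)
    · rcases two_disjoint hnov h h' with hlt | hlt
      · omega
      · omega
  -- the main counting
  have main : Opt J ≤ Acc.card + Opt Δ := by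
    obtain ⟨T, hTsub, hTno, hTcard⟩ := Opt_exists J
    rw [← hTcard]
    have hTv : ∀ t ∈ T, t.1 < t.2 := fun t ht => hJv t (hTsub ht)
    -- the slot assignment
    set φ : Iv → Iv ⊕ Iv := fun t =>
      if t ∈ Acc then Sum.inl t
      else if h1 : ∃ w, w ∈ Acc ∧ w ∈ Ihat ∧ Overlap w t ∧ w.2 ≤ t.2 then Sum.inl h1.choose
      else if h2 : ∃ w, w ∈ A ∧ w ∉ Acc ∧ Overlap w t ∧ w.2 ≤ t.2 then
        Sum.inr (E h2.choose)
      else if h3 : ∃ w, w ∈ R ∧ Overlap w t ∧ w.2 ≤ t.2 then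
        (if fR h3.choose ∈ T then Sum.inr (E (fR h3.choose)) else Sum.inl (fR h3.choose))
      else if h4 : ∃ w, (w ∈ A ∨ w ∈ R) ∧ Overlap w t ∧ w.2 ≤ t.2 then
        (if ∃ x, x ∈ A ∧ x ∉ Acc ∧ Overlap x t then Sum.inl h4.choose else Sum.inr (E t))
      else Sum.inr (E t)
      with hphidef
    -- characterization of the assignment
    have hspec : ∀ t ∈ T,
        (∃ s, φ t = Sum.inl s ∧
          ((t ∈ Acc ∧ s = t)
            ∨ (s ∈ Acc ∧ s ∈ Ihat ∧ Overlap s t ∧ s.2 ≤ t.2)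
            ∨ (∃ w, w ∈ R ∧ Overlap w t ∧ w.2 ≤ t.2 ∧ s = fR w ∧ s ∉ T)
            ∨ (s ∈ Acc ∧ s ∉ Ihat ∧ Overlap s t ∧ s.2 ≤ t.2 ∧
                ∃ x, x ∈ A ∧ x ∉ Acc ∧ Overlap x t ∧ t.2 < x.2))) ∨
        (∃ p, φ t = Sum.inr (E p) ∧ p ∈ Δ ∧
          ((p ∈ A ∧ p ∉ Acc ∧ Overlap p t ∧ p.2 ≤ t.2)
            ∨ (∃ w, w ∈ R ∧ Overlap w t ∧ w.2 ≤ t.2 ∧ p = fR w ∧ p ∈ T)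
            ∨ (p = t ∧ t ∉ Acc ∧ ∀ x ∈ A, x ∉ Acc → ¬ Overlap x t))) := by
      intro t ht
      have htJ : t ∈ J := hTsub ht
      have htv : t.1 < t.2 := hJv t htJ
      rw [hphidef]
      dsimp only
      split_ifs with h0 h1 h2 h3 hc3 h4 hx4
      · exact Or.inl ⟨t, rfl, Or.inl ⟨h0, rfl⟩⟩
      · obtain ⟨q1, q2, q3, q4⟩ := h1.choose_spec
        exact Or.inl ⟨h1.choose, rfl, Or.inr (Or.inl ⟨q1, q2, q3, q4⟩)⟩
      · obtain ⟨q1, q2, q3, q4⟩ := h2.choose_spec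
        exact Or.inr ⟨h2.choose, rfl, hAnAccD _ q1 q2, Or.inl ⟨q1, q2, q3, q4⟩⟩
      · -- fR h3.choose ∈ T
        obtain ⟨q1, q2, q3⟩ := h3.choose_spec
        exact Or.inr ⟨fR h3.choose, rfl, hfRD _ q1,
          Or.inr (Or.inl ⟨h3.choose, q1, q2, q3, rfl, hc3⟩)⟩
      · obtain ⟨q1, q2, q3⟩ := h3.choose_spec
        exact Or.inl ⟨fR h3.choose, rfl,
          Or.inr (Or.inr (Or.inl ⟨h3.choose, q1, q2, q3, rfl, hc3⟩))⟩
      · -- W4a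
        obtain ⟨q1, q2, q3⟩ := h4.choose_spec
        have hsA : h4.choose ∈ A := by
          rcases q1 with h | h
          · exact h
          · exact absurd ⟨h4.choose, h, q2, q3⟩ h3
        have hsAcc : h4.choose ∈ Acc := by
          by_contra hn
          exact h2 ⟨h4.choose, hsA, hn, q2, q3⟩
        have hsIh : h4.choose ∉ Ihat := by
          intro hn
          exact h1 ⟨h4.choose, hsAcc, hn, q2, q3⟩
        obtain ⟨x, hxA, hxAcc, hxov⟩ := hx4
        have hxbig : t.2 < x.2 := by
          by_contra hn
          exact h2 ⟨x, hxA, hxAcc, hxov, le_of_not_gt hn⟩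
        exact Or.inl ⟨h4.choose, rfl,
          Or.inr (Or.inr (Or.inr ⟨hsAcc, hsIh, q2, q3, x, hxA, hxAcc, hxov, hxbig⟩))⟩
      · -- W4s : some witness exists but no A\Acc interval overlaps t
        push_neg at hx4
        have htIh : t ∉ Ihat := by
          intro hn
          obtain ⟨d, hd, hdp, hdle⟩ := efGreedy_wit Ihat t hn
          rcases hR5 d hd with hdA | hdR
          · rcases hdp with rfl | hov
            · have : d ∈ Acc := by
                by_contra hnn
                exact (hAnAcc d hdA hnn).2 htJ
              exact h0 this
            · by_cases hdAcc : d ∈ Acc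
              · exact h1 ⟨d, hdAcc, efGreedy_subset Ihat hd, hov, hdle⟩
              · exact h2 ⟨d, hdA, hdAcc, hov, hdle⟩
          · rcases hdp with rfl | hov
            · exact h3 ⟨d, hdR, overlap_self htv, le_rfl⟩
            · exact h3 ⟨d, hdR, hov, hdle⟩
        exact Or.inr ⟨t, rfl,
          Finset.mem_union_left _ (Finset.mem_sdiff.mpr ⟨htJ, htIh⟩),
          Or.inr (Or.inr ⟨rfl, h0, hx4⟩)⟩
      · -- β : no witness at all
        rcases hR6 t htJ h0 with hw | ⟨htIh, c, hc, hov⟩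
        · exact absurd hw h4
        · have hnoax : ∀ x ∈ A, x ∉ Acc → ¬ Overlap x t := by
            intro x hxA hxAcc hxov
            have hcx : c ≠ x := fun h => hxAcc (h ▸ hc)
            have hncx : ¬ Overlap c x := hnovA c (hAccA hc) x hxA hcx
            rcases two_disjoint hncx (overlap_comm hov) (overlap_comm hxov) with h | h
            · exact h4 ⟨c, Or.inl (hAccA hc), hov, le_of_lt h⟩
            · exact h4 ⟨x, Or.inl hxA, hxov, le_of_lt h⟩
          exact Or.inr ⟨t, rfl,
            Finset.mem_union_left _ (Finset.mem_sdiff.mpr ⟨htJ, htIh⟩),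
            Or.inr (Or.inr ⟨rfl, h0, hnoax⟩)⟩
    -- the injection
    have hcard : T.card ≤ (Acc.disjSum D).card := by
      apply Finset.card_le_card_of_injOn φ
      · intro t ht
        rcases hspec t ht with ⟨s, hφ, hL⟩ | ⟨p, hφ, hpΔ, _⟩
        · rw [hφ, Finset.mem_coe, Finset.inl_mem_disjSum]
          rcases hL with ⟨h, rfl⟩ | ⟨h, _⟩ | ⟨w, hw, _, _, rfl, _⟩ | ⟨h, _⟩
          · exact h
          · exact h
          · exact (hR3 w hw).1
          · exact h
        · rw [hφ, Finset.mem_coe, Finset.inr_mem_disjSum]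
          exact (hEspec p hpΔ).1
      · intro t ht t' ht' heq
        have htF : t ∈ T := Finset.mem_coe.mp ht
        have ht'F : t' ∈ T := Finset.mem_coe.mp ht'
        by_contra hne
        have hnov : ¬ Overlap t t' := hTno t htF t' ht'F hne
        have hnov' : ¬ Overlap t' t := hTno t' ht'F t htF (Ne.symm hne)
        have htv : t.1 < t.2 := hTv t htF
        have ht'v : t'.1 < t'.2 := hTv t' ht'F
        rcases hspec t htF with ⟨s, hφ, hL⟩ | ⟨p, hφ, hpΔ, hP⟩ <;>
          rcases hspec t' ht'F with ⟨s', hφ', hL'⟩ | ⟨p', hφ', hp'Δ, hP'⟩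
        · -- inl / inl
          rw [hφ, hφ'] at heq
          have hss : s = s' := by simpa using heq
          subst hss
          rcases hL with ⟨ht0, hes⟩ | ⟨hs1, hs2, hs3, hs4⟩ |
              ⟨w, hw, hwov, hwle, hes, hsnT⟩ | ⟨hs1, hs2, hs3, hs4, x, hxA, hxAcc, hxov, hxbig⟩ <;>
            rcases hL' with ⟨ht0', hes'⟩ | ⟨hs1', hs2', hs3', hs4'⟩ |
              ⟨w', hw', hwov', hwle', hes', hsnT'⟩ | ⟨hs1', hs2', hs3', hs4', x', hxA', hxAcc', hxov', hxbig'⟩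
          -- (1,1)
          · exact hne (hes.symm.trans hes')
          -- (1,2)
          · rw [hes] at hs3'; exact hnov hs3'
          -- (1,3)
          · rw [hes] at hsnT'; exact hsnT' htF
          -- (1,4)
          · rw [hes] at hs3'; exact hnov hs3'
          -- (2,1)
          · rw [hes'] at hs3; exact hnov' hs3
          -- (2,2)
          · exact wit_inj htv ht'v hnov hs3 hs4 hs3' hs4'
          -- (2,3)
          · rw [hes'] at hs2; exact (hR3 w' hw').2.1 hs2
          -- (2,4)
          · exact hs2' hs2
          -- (3,1)
          · rw [hes'] at hsnT; exact hsnT ht'F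
          -- (3,2)
          · rw [hes] at hs2'; exact (hR3 w hw).2.1 hs2'
          -- (3,3)
          · have hff : fR w = fR w' := hes.symm.trans hes'
            have hww : w = w' := hR4 (Finset.mem_coe.mpr hw) (Finset.mem_coe.mpr hw') hff
            subst hww
            exact wit_inj htv ht'v hnov hwov hwle hwov' hwle'
          -- (3,4) : the key impossibility H1
          · obtain ⟨q1, q2, q3, q4⟩ := hR3 w hw
            rw [hes] at hs3' hs4'
            have hwx : Overlap w x' :=
              h1_geom htv ht'v (hJv _ (hAccJ q1)) hnov hwov hwle
                q3 q4 hs3' hs4' hxov' hxbig'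
            have hwI : w ∈ efGreedy Ihat := hR1 hw
            have hxI : x' ∈ efGreedy Ihat := (hAnAcc x' hxA' hxAcc').1
            have hwnx : w ≠ x' := fun h => hR2 w hw (h ▸ hxA')
            exact efGreedy_nonov Ihat w hwI x' hxI hwnx hwx
          -- (4,1)
          · rw [hes'] at hs3; exact hnov' hs3
          -- (4,2)
          · exact hs2 hs2'
          -- (4,3) : H1 mirrored
          · obtain ⟨q1, q2, q3, q4⟩ := hR3 w' hw'
            rw [hes'] at hs3 hs4
            have hwx : Overlap w' x :=
              h1_geom ht'v htv (hJv _ (hAccJ q1)) hnov' hwov' hwle'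
                q3 q4 hs3 hs4 hxov hxbig
            have hwI : w' ∈ efGreedy Ihat := hR1 hw'
            have hxI : x ∈ efGreedy Ihat := (hAnAcc x hxA hxAcc).1
            have hwnx : w' ≠ x := fun h => hR2 w' hw' (h ▸ hxA)
            exact efGreedy_nonov Ihat w' hwI x hxI hwnx hwx
          -- (4,4)
          · exact wit_inj htv ht'v hnov hs3 hs4 hs3' hs4'
        · rw [hφ, hφ'] at heq; simp at heq
        · rw [hφ, hφ'] at heq; simp at heq
        · -- inr / inr
          rw [hφ, hφ'] at heq
          have hEE : E p = E p' := by simpa using heq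
          have hpp : p = p' ∨ Overlap p p' := hEinj p hpΔ p' hp'Δ hEE
          rcases hP with ⟨hp1, hp2, hp3, hp4⟩ | ⟨w, hw, hwov, hwle, hpe, hpT⟩ |
              ⟨hpe, hpAcc, hpax⟩ <;>
            rcases hP' with ⟨hp1', hp2', hp3', hp4'⟩ | ⟨w', hw', hwov', hwle', hpe', hpT'⟩ |
              ⟨hpe', hpAcc', hpax'⟩
          -- (W2,W2)
          · by_cases hpe0 : p = p'
            · rw [hpe0] at hp3 hp4
              exact wit_inj htv ht'v hnov hp3 hp4 hp3' hp4'
            · rcases hpp with h | hov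
              · exact hpe0 h
              · exact hnovA p hp1 p' hp1' hpe0 hov
          -- (W2,W3b)
          · have hp'Acc : p' ∈ Acc := by rw [hpe']; exact (hR3 w' hw').1
            have hpe0 : p ≠ p' := fun h => hp2 (h ▸ hp'Acc)
            rcases hpp with h | hov
            · exact hpe0 h
            · exact hnovA p hp1 p' (hAccA hp'Acc) hpe0 hov
          -- (W2, self')
          · rcases hpp with h | hov
            · have hpJ : p ∈ J := by rw [h, hpe']; exact hTsub ht'F
              exact (hAnAcc p hp1 hp2).2 hpJ
            · rw [hpe'] at hov
              exact hpax' p hp1 hp2 hov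
          -- (W3b, W2)
          · have hpAcc0 : p ∈ Acc := by rw [hpe]; exact (hR3 w hw).1
            have hpe0 : p ≠ p' := fun h => hp2' (h ▸ hpAcc0)
            rcases hpp with h | hov
            · exact hpe0 h
            · exact hnovA p (hAccA hpAcc0) p' hp1' hpe0 hov
          -- (W3b,W3b)
          · by_cases hww : w = w'
            · subst hww
              exact wit_inj htv ht'v hnov hwov hwle hwov' hwle'
            · have hpe0 : p ≠ p' := by
                intro h
                rw [hpe, hpe'] at h
                exact hww (hR4 (Finset.mem_coe.mpr hw) (Finset.mem_coe.mpr hw') h)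
              rcases hpp with h | hov
              · exact hpe0 h
              · exact hnovA p (hAccA (by rw [hpe]; exact (hR3 w hw).1)) p'
                  (hAccA (by rw [hpe']; exact (hR3 w' hw').1)) hpe0 hov
          -- (W3b, self')
          · have hpAcc0 : p ∈ Acc := by rw [hpe]; exact (hR3 w hw).1
            have hpe0 : p ≠ p' := by
              intro h
              rw [hpe'] at h
              exact hpAcc' (h ▸ hpAcc0)
            rcases hpp with h | hov
            · exact hpe0 h
            · rw [hpe'] at hov
              have hpt' : p ≠ t' := by
                intro h
                exact hpAcc' (h ▸ hpAcc0)
              exact hTno p hpT t' ht'F hpt' hov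
          -- (self, W2)
          · rcases hpp with h | hov
            · have hp'J : p' ∈ J := by rw [← h, hpe]; exact hTsub htF
              exact (hAnAcc p' hp1' hp2').2 hp'J
            · rw [hpe] at hov
              exact hpax p' hp1' hp2' (overlap_comm hov)
          -- (self, W3b)
          · have hp'Acc : p' ∈ Acc := by rw [hpe']; exact (hR3 w' hw').1
            have hpe0 : p ≠ p' := by
              intro h
              rw [hpe] at h
              exact hpAcc (h.symm ▸ hp'Acc)
            rcases hpp with h | hov
            · exact hpe0 h
            · rw [hpe] at hov
              have hpt : t ≠ p' := by
                intro h
                exact hpAcc (h ▸ hp'Acc)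
              exact hTno t htF p' hpT' hpt hov
          -- (self, self)
          · rw [hpe, hpe'] at hpp
            rcases hpp with h | hov
            · exact hne h
            · exact hnov hov
    rw [Finset.card_disjSum] at hcard
    have hD2 : D.card ≤ Opt Δ := card_le_Opt (efGreedy_subset Δ) (efGreedy_nonov Δ)
    omega
  -- conclude
  have hTG : TrustGreedy Ihat I = Acc.card := rfl
  rw [hTG]
  omega
end
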